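/- arXiv:2510.18359 — 5 statements merged into one kernel-verified Lean document; each statement's English description precedes it below -/
import Mathlib

section
/- Let G be a connected 4-regular simple graph and let H be a Hamiltonian cycle in the subdivided double D(G). Then H has no hairpin if and only if the cyclic sequence of edges of G obtained by reading off, in cyclic order along H, the subdivision vertices visited by H forms an Eulerian circuit of G (a closed walk in G traversing every edge of G exactly once). -/
open SimpleGraph

/-- The subdivided double `D(G)` of a simple graph `G`: vertices are the twin vertices
`(v, i)` for `v : V`, `i : Bool`, together with the subdivision vertices (edges of `G`);
a twin vertex `(v, i)` is adjacent to a subdivision vertex `e` iff `v` is an endpoint of `e`. -/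
def subdividedDouble {V : Type*} (G : SimpleGraph V) :
    SimpleGraph ((V × Bool) ⊕ ↥G.edgeSet) :=
  SimpleGraph.fromRel fun x y =>
    ∃ (v : V) (i : Bool) (e : G.edgeSet),
      x = Sum.inl (v, i) ∧ y = Sum.inr e ∧ v ∈ (e : Sym2 V)

section Helpers

variable {V : Type} {G : SimpleGraph V}

private lemma sd_adj_cases {x y : (V × Bool) ⊕ ↥G.edgeSet}
    (h : (subdividedDouble G).Adj x y) :
    (∃ (v : V) (i : Bool) (e : G.edgeSet),
        x = Sum.inl (v, i) ∧ y = Sum.inr e ∧ v ∈ (e : Sym2 V)) ∨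
    (∃ (v : V) (i : Bool) (e : G.edgeSet),
        x = Sum.inr e ∧ y = Sum.inl (v, i) ∧ v ∈ (e : Sym2 V)) := by
  rw [subdividedDouble, SimpleGraph.fromRel_adj] at h
  rcases h.2 with ⟨v, i, e, hx, hy, hv⟩ | ⟨v, i, e, hy, hx, hv⟩
  · exact Or.inl ⟨v, i, e, hx, hy, hv⟩
  · exact Or.inr ⟨v, i, e, hx, hy, hv⟩

private lemma adj_inl {v : V} {i : Bool} {y : (V × Bool) ⊕ ↥G.edgeSet}
    (h : (subdividedDouble G).Adj (Sum.inl (v, i)) y) :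
    ∃ e : G.edgeSet, y = Sum.inr e ∧ v ∈ (e : Sym2 V) := by
  rcases sd_adj_cases h with ⟨v', i', e, hx, hy, hv⟩ | ⟨v', i', e, hx, hy, hv⟩
  · obtain ⟨rfl, rfl⟩ : v = v' ∧ i = i' := by simpa [Prod.ext_iff] using hx
    exact ⟨e, hy, hv⟩
  · exact absurd hx (by simp)

private lemma adj_inr {e : G.edgeSet} {y : (V × Bool) ⊕ ↥G.edgeSet}
    (h : (subdividedDouble G).Adj (Sum.inr e) y) :
    ∃ (v : V) (i : Bool), y = Sum.inl (v, i) ∧ v ∈ (e : Sym2 V) := by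
  rcases sd_adj_cases h with ⟨v', i', e', hx, hy, hv⟩ | ⟨v', i', e', hx, hy, hv⟩
  · exact absurd hx (by simp)
  · obtain rfl : e = e' := by simpa using hx
    exact ⟨v', i', hy, hv⟩

end Helpers

section ListHelpers

private lemma filterMap_isRotated {α β : Type*} (f : α → Option β) {l l' : List α}
    (h : l ~r l') : l.filterMap f ~r l'.filterMap f := by
  obtain ⟨n, rfl⟩ := h
  rcases eq_or_ne l [] with rfl | hl
  · simp
  have hk : n % l.length ≤ l.length := le_of_lt (Nat.mod_lt _ (List.length_pos_iff.mpr hl))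
  rw [← List.rotate_mod, List.rotate_eq_drop_append_take hk]
  conv_lhs => rw [← List.take_append_drop (n % l.length) l]
  rw [List.filterMap_append, List.filterMap_append]
  exact List.isRotated_append

private lemma chain'_rotate {α : Type*} {R : α → α → Prop} {L : List α}
    (hc : List.Chain' R L)
    (hw : ∀ a b, L.getLast? = some a → L.head? = some b → R a b) (k : ℕ) :
    List.Chain' R (L.drop k ++ L.take k) ∧
      ∀ a b, (L.drop k ++ L.take k).getLast? = some a →
        (L.drop k ++ L.take k).head? = some b → R a b := by
  have hAB : L.take k ++ L.drop k = L := List.take_append_drop k L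
  rw [← hAB] at hc
  obtain ⟨hA, hB, hmid⟩ := List.isChain_append.mp hc
  rcases eq_or_ne (L.take k) [] with hAe | hAne
  · have hD : L.drop k = L := by simpa [hAe] using hAB
    rw [hAe, List.append_nil, hD]
    rw [hD] at hB
    exact ⟨hB, hw⟩
  rcases eq_or_ne (L.drop k) [] with hBe | hBne
  · have hD : L.take k = L := by simpa [hBe] using hAB
    rw [hBe, List.nil_append, hD]
    rw [hD] at hA
    exact ⟨hA, hw⟩
  constructor
  · refine List.isChain_append.mpr ⟨hB, hA, fun x hx y hy => hw x y ?_ ?_⟩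
    · rw [← hAB, List.getLast?_append_of_ne_nil _ hBne]
      exact hx
    · rw [← hAB, List.head?_append_of_ne_nil _ hAne]
      exact hy
  · intro a b hla hlb
    rw [List.getLast?_append_of_ne_nil _ hAne] at hla
    rw [List.head?_append_of_ne_nil _ hBne] at hlb
    exact hmid a hla b hlb

end ListHelpers

section DartHelpers

variable {V : Type} {G : SimpleGraph V}

private lemma head_darts_fst {u v : V} (p : G.Walk u v) {d : G.Dart}
    (h : p.darts.head? = some d) : d.fst = u := by
  cases p with
  | nil => simp at h
  | cons h' p => simp only [SimpleGraph.Walk.darts_cons, List.head?_cons,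
      Option.some.injEq] at h; rw [← h]

private lemma last_darts_snd {u v : V} (p : G.Walk u v) {d : G.Dart}
    (h : p.darts.getLast? = some d) : d.snd = v := by
  induction p with
  | nil => simp at h
  | cons h' p ih =>
    cases p with
    | nil =>
      simp only [SimpleGraph.Walk.darts_cons, SimpleGraph.Walk.darts_nil,
        List.getLast?_singleton, Option.some.injEq] at h
      rw [← h]
    | cons h'' q =>
      rw [SimpleGraph.Walk.darts_cons, SimpleGraph.Walk.darts_cons,
        List.getLast?_cons_cons] at h
      exact ih (by rw [SimpleGraph.Walk.darts_cons]; exact h)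

end DartHelpers

section DartContra

variable {V : Type} {G : SimpleGraph V}

private lemma dart_edge_eq {d : G.Dart} : d.edge = s(d.fst, d.snd) := by
  rcases d with ⟨⟨a, b⟩, hab⟩; rfl

private lemma dart_contra {u : V} (c : G.Walk u u)
    (htrail : c.edges.Nodup)
    {T : List (Sym2 V)} {ee : Sym2 V} {v w : V} (hvw : v ≠ w) (hee : ee = s(v, w))
    (hrot : c.edges ~r (T ++ [ee]))
    {f g : Sym2 V} (hf : T.head? = some f) (hg : T.getLast? = some g)
    (hvf : v ∈ f) (hvg : v ∈ g) : False := by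
  have hS : (T ++ [ee]).Nodup := hrot.perm.nodup htrail
  have heT : ee ∉ T := by
    rw [List.nodup_append] at hS
    exact fun h => hS.2.2 ee h ee (by simp) rfl
  have hfe : f ≠ ee := fun h => heT (h ▸ List.mem_of_mem_head? hf)
  have hge : g ≠ ee := fun h => heT (h ▸ List.mem_of_mem_getLast? hg)
  have hTne : T ≠ [] := fun h => by simp [h] at hf
  obtain ⟨n, hn⟩ := hrot
  have hlnil : c.edges ≠ [] := by
    intro h
    rw [h, List.rotate_nil] at hn
    exact (List.append_ne_nil_of_right_ne_nil T (by simp)) hn.symm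
  set k := n % c.edges.length with hkdef
  have hk : c.edges.drop k ++ c.edges.take k = T ++ [ee] := by
    rw [← List.rotate_eq_drop_append_take
      (le_of_lt (Nat.mod_lt _ (List.length_pos_iff.mpr hlnil)))]
    rw [List.rotate_mod]
    exact hn
  have hed : c.edges = c.darts.map SimpleGraph.Dart.edge := rfl
  have hmapD : (c.darts.drop k ++ c.darts.take k).map SimpleGraph.Dart.edge = T ++ [ee] := by
    rw [List.map_append, List.map_drop, List.map_take, ← hed, hk]
  obtain ⟨hchainD, hwrapD⟩ := chain'_rotate (c.isChain_dartAdj_darts)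
      (fun a b ha hb => by
        have h1 : a.snd = u := last_darts_snd c ha
        have h2 : b.fst = u := head_darts_fst c hb
        exact h1.trans h2.symm) k
  obtain ⟨DT, De, hDeq, hDT, hDe⟩ := List.map_eq_append_iff.mp hmapD
  cases De with
  | nil => simp at hDe
  | cons d De' =>
    simp only [List.map_cons, List.cons.injEq] at hDe
    obtain ⟨hdedge, hDe'⟩ := hDe
    rw [List.map_eq_nil_iff] at hDe'
    subst hDe'
    rw [hDeq] at hchainD hwrapD
    have hDTne : DT ≠ [] := by
      intro h; rw [h] at hDT; exact hTne (by simpa using hDT.symm)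
    obtain ⟨hBT, hBd, hmid⟩ := List.isChain_append.mp hchainD
    rcases hDTlast : DT.getLast? with _ | dg
    · exact hDTne (List.getLast?_eq_none_iff.mp hDTlast)
    rcases hDThead : DT.head? with _ | df
    · exact hDTne (List.head?_eq_none_iff.mp hDThead)
    have hjun : dg.snd = d.fst := hmid dg hDTlast d rfl
    have hwr : d.snd = df.fst := by
      refine hwrapD d df ?_ ?_
      · exact List.getLast?_concat
      · rw [List.head?_append_of_ne_nil _ hDTne]; exact hDThead
    have hdf : df.edge = f := by
      have h3 := congrArg List.head? hDT
      rw [List.head?_map, hDThead, hf] at h3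
      simpa using h3
    have hdg : dg.edge = g := by
      have h3 := congrArg List.getLast? hDT
      rw [List.getLast?_map, hDTlast, hg] at h3
      simpa using h3
    have hdvw : s(d.fst, d.snd) = s(v, w) := by rw [← dart_edge_eq, hdedge, hee]
    rcases Sym2.eq_iff.mp hdvw with ⟨h1, h2⟩ | ⟨h1, h2⟩
    · -- d = (v, w)
      have hffst : df.fst = w := by rw [← hwr, h2]
      have : v ∈ s(df.fst, df.snd) := by rw [← dart_edge_eq, hdf]; exact hvf
      rcases Sym2.mem_iff.mp this with h3 | h3
      · exact hvw (h3.trans hffst)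
      · apply hfe
        rw [← hdf, dart_edge_eq, hffst, ← h3, hee, Sym2.eq_swap]
    · -- d = (w, v)
      have hgsnd : dg.snd = w := by rw [hjun, h1]
      have : v ∈ s(dg.fst, dg.snd) := by rw [← dart_edge_eq, hdg]; exact hvg
      rcases Sym2.mem_iff.mp this with h3 | h3
      · apply hge
        rw [← hdg, dart_edge_eq, hgsnd, ← h3, hee]
      · exact hvw (h3.trans hgsnd)

end DartContra

private lemma proj_eq {V : Type} {G : SimpleGraph V} (l : List ((V × Bool) ⊕ ↥G.edgeSet)) :
    ((l.filterMap Sum.getRight?).map (fun e => (e : Sym2 V)))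
      = (l.filterMap Sum.getRight?).map Subtype.val := by
  simp only [bind_pure_comp, List.map_eq_map, List.map_map]
  rfl

section LastEdge

private lemma eq_concat_of_last_edge {V' : Type*} {D : SimpleGraph V'} {t : V'} :
    ∀ {y z : V'} (W : D.Walk y z), W.support.Nodup → s(t, z) ∈ W.edges →
      ∃ (q : D.Walk y t) (h : D.Adj t z), W = q.concat h := by
  intro y z W
  induction W with
  | nil => intro _ h; simp at h
  | @cons a m z h₁ W₁ ih =>
    intro hnd hmem
    rw [SimpleGraph.Walk.edges_cons, List.mem_cons] at hmem
    rw [SimpleGraph.Walk.support_cons, List.nodup_cons] at hnd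
    rcases hmem with heq | hmem
    · rcases Sym2.eq_iff.mp heq with ⟨rfl, rfl⟩ | ⟨h3, h4⟩
      · -- t = a, z = m ; W₁ : Walk t z with z = t... here z := m
        cases W₁ with
        | nil => exact ⟨SimpleGraph.Walk.nil, h₁, (SimpleGraph.Walk.concat_nil h₁).symm⟩
        | cons h₂ W₂ =>
          rw [SimpleGraph.Walk.support_cons, List.nodup_cons] at hnd
          exact absurd W₂.end_mem_support (by exact hnd.2.1)
      · -- t = m, z = a
        subst h3
        exact absurd W₁.end_mem_support (h4 ▸ hnd.1)
    · obtain ⟨q₁, h', rfl⟩ := ih hnd.2 hmem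
      exact ⟨SimpleGraph.Walk.cons h₁ q₁, h', (SimpleGraph.Walk.concat_cons _ _ _).symm⟩

end LastEdge

section Build

variable {V : Type} {G : SimpleGraph V}

private lemma build {x₀ : (V × Bool) ⊕ ↥G.edgeSet}
    {H : (subdividedDouble G).Walk x₀ x₀}
    (hnh : ¬ ∃ (v : V) (e : G.edgeSet),
        s(Sum.inl (v, false), Sum.inr e) ∈ H.edges ∧
        s(Sum.inl (v, true), Sum.inr e) ∈ H.edges) :
    ∀ (n : ℕ) ⦃y z : (V × Bool) ⊕ ↥G.edgeSet⦄ (W : (subdividedDouble G).Walk y z),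
      W.length = n →
      ∀ (v : V) (b : Bool) (vend : V) (bend : Bool),
        y = Sum.inl (v, b) → z = Sum.inl (vend, bend) →
        W.support.Nodup → (∀ ε ∈ W.edges, ε ∈ H.edges) →
        ∃ c : G.Walk v vend,
          c.edges = (W.support.filterMap Sum.getRight?).map Subtype.val := by
  intro n
  induction n using Nat.strong_induction_on with
  | _ n ih =>
  intro y z W hlen v b vend bend hy hz hnd hsub
  subst hy
  cases W with
  | nil =>
    obtain ⟨rfl, rfl⟩ : vend = v ∧ bend = b := by
      have := hz.symm
      simp only [Sum.inl.injEq, Prod.mk.injEq] at this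
      exact this
    exact ⟨SimpleGraph.Walk.nil, by rfl⟩
  | cons h₁ W₀ =>
    obtain ⟨e, rfl, hv⟩ := adj_inl h₁
    cases W₀ with
    | nil => exact absurd hz (by simp)
    | cons h₂ W₁ =>
      obtain ⟨v₂, b₂, hm₂, hv₂⟩ := adj_inr h₂
      subst hm₂
      have hne : v ≠ v₂ := by
        rintro rfl
        by_cases hb : b = b₂
        · subst hb
          rw [SimpleGraph.Walk.support_cons, SimpleGraph.Walk.support_cons,
            List.nodup_cons] at hnd
          exact hnd.1 (List.mem_cons_of_mem _ W₁.start_mem_support)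
        · have he1 : s(Sum.inl (v, b), Sum.inr e) ∈ H.edges := hsub _ (by simp)
          have he2 : s(Sum.inl (v, b₂), Sum.inr e) ∈ H.edges := by
            rw [Sym2.eq_swap]
            exact hsub _ (by simp)
          cases b <;> cases b₂
          · exact hb rfl
          · exact hnh ⟨v, e, he1, he2⟩
          · exact hnh ⟨v, e, he2, he1⟩
          · exact hb rfl
      have hee : (e : Sym2 V) = s(v, v₂) := (Sym2.mem_and_mem_iff hne).mp ⟨hv, hv₂⟩
      have hadj : G.Adj v v₂ := by
        rw [← SimpleGraph.mem_edgeSet, ← hee]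
        exact e.2
      have hlt : W₁.length < n := by
        simp only [SimpleGraph.Walk.length_cons] at hlen
        omega
      obtain ⟨c₁, hc₁⟩ := ih _ hlt W₁ rfl v₂ b₂ vend bend rfl hz
        (List.nodup_cons.mp (List.nodup_cons.mp hnd).2).2
        (fun ε hε => hsub ε (by
          rw [SimpleGraph.Walk.edges_cons, SimpleGraph.Walk.edges_cons]
          exact List.mem_cons_of_mem _ (List.mem_cons_of_mem _ hε)))
      refine ⟨SimpleGraph.Walk.cons hadj c₁, ?_⟩
      rw [SimpleGraph.Walk.edges_cons, hc₁]
      simp only [SimpleGraph.Walk.support_cons, List.filterMap_cons, Sum.getRight?_inl,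
        Sum.getRight?_inr, List.map_cons]
      rw [hee]

end Build

section Forward

variable {V : Type} [DecidableEq V] {G : SimpleGraph V}

private lemma forward_inl {v₀ : V} {b₀ : Bool}
    (H : (subdividedDouble G).Walk (Sum.inl (v₀, b₀)) (Sum.inl (v₀, b₀)))
    (hnd : H.support.tail.Nodup)
    (hmem : ∀ z, z ∈ H.support.tail)
    (hnh : ¬ ∃ (v : V) (e : G.edgeSet),
        s(Sum.inl (v, false), Sum.inr e) ∈ H.edges ∧
        s(Sum.inl (v, true), Sum.inr e) ∈ H.edges) :
    ∃ c : G.Walk v₀ v₀, c.IsEulerian ∧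
      c.edges = (H.support.tail.filterMap Sum.getRight?).map Subtype.val := by
  cases H with
  | nil =>
    have := hmem (Sum.inl (v₀, !b₀))
    simp at this
  | cons h₁ W₀ =>
    obtain ⟨e₀, hm, hv₀⟩ := adj_inl h₁
    subst hm
    cases W₀ with
    | cons h₂ W₁ =>
      obtain ⟨v₁, b₁, hm₂, hv₁⟩ := adj_inr h₂
      subst hm₂
      simp only [SimpleGraph.Walk.support_cons, List.tail_cons] at hnd hmem ⊢
      have hne : v₁ ≠ v₀ := by
        intro h
        subst h
        by_cases hb : b₁ = b₀
        · subst hb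
          cases W₁ with
          | nil =>
            have := hmem (Sum.inl (v₁, !b₁))
            simp only [SimpleGraph.Walk.support_nil, List.mem_cons, List.mem_singleton,
              List.not_mem_nil] at this
            rcases this with h | h | h
            · exact absurd h (by simp)
            · exact absurd h (by simp)
            · exact h
          | cons h₃ W₂ =>
            have h4 := (List.nodup_cons.mp hnd).2
            rw [SimpleGraph.Walk.support_cons, List.nodup_cons] at h4
            exact h4.1 W₂.end_mem_support
        · have h1e : s(Sum.inl (v₁, b₀), Sum.inr e₀) ∈
              (SimpleGraph.Walk.cons h₁ (SimpleGraph.Walk.cons h₂ W₁)).edges := by simp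
          have h2e : s(Sum.inl (v₁, b₁), Sum.inr e₀) ∈
              (SimpleGraph.Walk.cons h₁ (SimpleGraph.Walk.cons h₂ W₁)).edges := by
            rw [Sym2.eq_swap]; simp
          cases b₀ <;> cases b₁
          · exact hb rfl
          · exact hnh ⟨v₁, e₀, h1e, h2e⟩
          · exact hnh ⟨v₁, e₀, h2e, h1e⟩
          · exact hb rfl
      have hee : (e₀ : Sym2 V) = s(v₀, v₁) :=
        (Sym2.mem_and_mem_iff hne.symm).mp ⟨hv₀, hv₁⟩
      have hadj : G.Adj v₀ v₁ := by
        rw [← SimpleGraph.mem_edgeSet, ← hee]; exact e₀.2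
      obtain ⟨c₁, hc₁⟩ := build hnh W₁.length W₁ rfl v₁ b₁ v₀ b₀ rfl rfl
        ((List.nodup_cons.mp hnd).2)
        (fun ε hε => by
          rw [SimpleGraph.Walk.edges_cons, SimpleGraph.Walk.edges_cons]
          exact List.mem_cons_of_mem _ (List.mem_cons_of_mem _ hε))
      have hedges : (SimpleGraph.Walk.cons hadj c₁).edges =
          ((Sum.inr e₀ :: W₁.support :
              List ((V × Bool) ⊕ ↥G.edgeSet)).filterMap Sum.getRight?).map Subtype.val := by
        rw [SimpleGraph.Walk.edges_cons, hc₁]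
        simp only [List.filterMap_cons, Sum.getRight?_inr, List.map_cons]
        rw [hee]
      refine ⟨SimpleGraph.Walk.cons hadj c₁, ?_, hedges⟩
      have htrail : (SimpleGraph.Walk.cons hadj c₁).IsTrail := by
        constructor
        rw [hedges]
        refine List.Nodup.map Subtype.val_injective ?_
        refine List.Nodup.filterMap ?_ hnd
        intro a a' b hb1 hb2
        rw [Option.mem_def, Sum.getRight?_eq_some_iff] at hb1 hb2
        rw [hb1, hb2]
      refine htrail.isEulerian_of_forall_mem ?_
      intro ε hε
      rw [hedges]
      exact List.mem_map.mpr ⟨⟨ε, hε⟩,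
        List.mem_filterMap.mpr ⟨Sum.inr ⟨ε, hε⟩, hmem _, rfl⟩, rfl⟩

end Forward

section Backward

variable {V : Type} {G : SimpleGraph V}

private lemma backward_core2 {v : V} {e : G.edgeSet} {β₁ β₂ : Bool} (hβ : β₁ ≠ β₂)
    (hve : v ∈ (e : Sym2 V))
    (q : (subdividedDouble G).Walk (Sum.inl (v, β₁)) (Sum.inl (v, β₂)))
    {u : V} (c : G.Walk u u) (htrail : c.edges.Nodup)
    (hrot : c.edges ~r
      (((q.support ++ [Sum.inr e]).filterMap Sum.getRight?).map Subtype.val)) :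
    False := by
  obtain ⟨w, hew⟩ := Sym2.mem_iff_exists.mp hve
  have hvw : v ≠ w := G.ne_of_adj ((SimpleGraph.mem_edgeSet G).mp (hew ▸ e.2))
  cases q with
  | nil => exact hβ rfl
  | cons h₃ q₁ =>
    obtain ⟨f, hm3, hvf⟩ := adj_inl h₃
    subst hm3
    obtain ⟨x, r, h₄, hqeq⟩ := SimpleGraph.Walk.exists_cons_eq_concat h₃ q₁
    obtain ⟨g, hm4, hvg⟩ := adj_inl ((subdividedDouble G).adj_symm h₄)
    subst hm4
    set T : List (Sym2 V) :=
      (((SimpleGraph.Walk.cons h₃ q₁).support.filterMap Sum.getRight?).map Subtype.val)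
      with hTdef
    have hsplit :
        ((((SimpleGraph.Walk.cons h₃ q₁).support ++
            [(Sum.inr e : (V × Bool) ⊕ ↥G.edgeSet)]).filterMap Sum.getRight?).map
          Subtype.val) = T ++ [(e : Sym2 V)] := by
      rw [List.filterMap_append, List.map_append, hTdef]
      rfl
    rw [hsplit] at hrot
    have hTf : T.head? = some (f : Sym2 V) := by
      rw [hTdef, SimpleGraph.Walk.support_cons, List.filterMap_cons]
      simp only [Sum.getRight?_inl]
      rw [SimpleGraph.Walk.support_eq_cons q₁, List.filterMap_cons]
      simp only [Sum.getRight?_inr, List.map_cons, List.head?_cons]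
    have hq12 : (SimpleGraph.Walk.cons h₃ q₁).support
        = r.support ++ [(Sum.inl (v, β₂) : (V × Bool) ⊕ ↥G.edgeSet)] := by
      rw [hqeq, SimpleGraph.Walk.support_concat]
    have h6 : r.support.getLast (SimpleGraph.Walk.support_ne_nil r) = Sum.inr g := by simp
    have hrsup : r.support = r.support.dropLast ++ [Sum.inr g] := by
      conv_lhs => rw [← List.dropLast_append_getLast (SimpleGraph.Walk.support_ne_nil r)]
      rw [h6]
    have hTg : T.getLast? = some (g : Sym2 V) := by
      rw [hTdef, hq12, hrsup, List.filterMap_append, List.filterMap_append,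
        List.map_append, List.map_append]
      rw [List.append_assoc]
      rw [List.getLast?_append_of_ne_nil _ (by simp : (([Sum.inr g] :
        List ((V × Bool) ⊕ ↥G.edgeSet)).filterMap Sum.getRight?).map Subtype.val ++
        (([Sum.inl (v, β₂)] : List ((V × Bool) ⊕ ↥G.edgeSet)).filterMap
          Sum.getRight?).map Subtype.val ≠ [])]
      simp [List.filterMap_cons, Sum.getRight?_inl]
    exact dart_contra c htrail hvw hew hrot hTf hTg hvf hvg

end Backward

section BackwardCore

variable {V : Type} {G : SimpleGraph V}

private lemma backward_core {v : V} {e : G.edgeSet}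
    (H : (subdividedDouble G).Walk (Sum.inr e) (Sum.inr e))
    (hnd : H.support.tail.Nodup)
    (h1 : s(Sum.inl (v, false), Sum.inr e) ∈ H.edges)
    (h2 : s(Sum.inl (v, true), Sum.inr e) ∈ H.edges)
    {u : V} (c : G.Walk u u) (htrail : c.edges.Nodup)
    (hrot : c.edges ~r ((H.support.tail.filterMap Sum.getRight?).map Subtype.val)) :
    False := by
  have hve : v ∈ (e : Sym2 V) := by
    obtain ⟨e', he', hv⟩ := adj_inl
      ((SimpleGraph.mem_edgeSet (subdividedDouble G)).mp (H.edges_subset_edgeSet h1))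
    obtain rfl : e' = e := by simpa using he'.symm
    exact hv
  cases H with
  | nil => simp at h1
  | cons h₁ W =>
    obtain ⟨a₁, β₁, hm, hva₁⟩ := adj_inr h₁
    subst hm
    simp only [SimpleGraph.Walk.support_cons, List.tail_cons] at hnd hrot
    have hclass : ∀ i : Bool,
        s(Sum.inl (v, i), Sum.inr e) ∈ (SimpleGraph.Walk.cons h₁ W).edges →
        (a₁ = v ∧ β₁ = i) ∨
        ∃ (q : (subdividedDouble G).Walk (Sum.inl (a₁, β₁)) (Sum.inl (v, i)))
          (h' : (subdividedDouble G).Adj (Sum.inl (v, i)) (Sum.inr e)),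
            W = q.concat h' := by
      intro i hi
      rw [SimpleGraph.Walk.edges_cons, List.mem_cons] at hi
      rcases hi with hf | hw
      · rcases Sym2.eq_iff.mp hf with ⟨h3, h4⟩ | ⟨h3, h4⟩
        · exact absurd h3 (by simp)
        · left
          have h5 : (v, i) = (a₁, β₁) := by simpa using h3
          exact ⟨(congrArg Prod.fst h5).symm, (congrArg Prod.snd h5).symm⟩
      · exact Or.inr (eq_concat_of_last_edge W hnd hw)
    rcases hclass false h1 with ⟨rfl, rfl⟩ | ⟨q, h', hWeq⟩
    · rcases hclass true h2 with ⟨-, hcontra⟩ | ⟨q, h', hWeq⟩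
      · simp at hcontra
      · rw [hWeq, SimpleGraph.Walk.support_concat] at hrot
        exact backward_core2 (by simp) hve q c htrail hrot
    · rcases hclass true h2 with ⟨rfl, rfl⟩ | ⟨q₂, h₂', hWeq₂⟩
      · rw [hWeq, SimpleGraph.Walk.support_concat] at hrot
        exact backward_core2 (by simp) hve q c htrail hrot
      · -- both are "last edge": the two concat decompositions force equal endpoints
        have hsup := congrArg SimpleGraph.Walk.support (hWeq.symm.trans hWeq₂)
        rw [SimpleGraph.Walk.support_concat, SimpleGraph.Walk.support_concat] at hsup
        have hqq : q.support = q₂.support := by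
          have := congrArg List.dropLast hsup
          rwa [
            List.dropLast_concat, List.dropLast_concat] at this
        have e1 : q.support.getLast? = some (Sum.inl (v, false)) := by
          rw [List.getLast?_eq_getLast (SimpleGraph.Walk.support_ne_nil _)]
          simp
        have e2 : q₂.support.getLast? = some (Sum.inl (v, true)) := by
          rw [List.getLast?_eq_getLast (SimpleGraph.Walk.support_ne_nil _)]
          simp
        rw [hqq, e2] at e1
        simp at e1

end BackwardCore

/-- A Hamiltonian cycle of the subdivided double has no hairpin (a two-edge path
`(v,0) – e – (v,1)` between the two twin copies of a vertex `v`) if and only if the cyclic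
sequence of subdivision vertices it visits is the edge sequence of an Eulerian circuit
of `G` (up to rotation of the cyclic order). -/
theorem subdividedDouble_no_hairpin_iff_eulerian {V : Type} [Fintype V] [DecidableEq V]
    (G : SimpleGraph V) [DecidableRel G.Adj]
    (hconn : G.Connected) (hreg : G.IsRegularOfDegree 4)
    (x : (V × Bool) ⊕ ↥G.edgeSet) (H : (subdividedDouble G).Walk x x)
    (hH : H.IsHamiltonianCycle) :
    (¬ ∃ (v : V) (e : G.edgeSet),
        s(Sum.inl (v, false), Sum.inr e) ∈ H.edges ∧
        s(Sum.inl (v, true), Sum.inr e) ∈ H.edges) ↔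
      ∃ (u : V) (c : G.Walk u u), c.IsEulerian ∧
        c.edges ~r ((H.support.tail.filterMap Sum.getRight?).map
          (fun e => (e : Sym2 V))) := by
  have hmemtail : ∀ z, z ∈ H.support.tail := by
    intro z
    have h0 := (hH.isHamiltonian_tail).mem_support z
    rwa [SimpleGraph.Walk.support_tail_of_not_nil H hH.isCycle.not_nil] at h0
  have hndtail : H.support.tail.Nodup := hH.isCycle.support_nodup
  rw [proj_eq]
  constructor
  · intro hnh
    cases x with
    | inl p =>
      obtain ⟨v₀, b₀⟩ := p
      obtain ⟨c, heul, hedges⟩ := forward_inl H hndtail hmemtail hnh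
      exact ⟨v₀, c, heul, hedges ▸ List.IsRotated.refl _⟩
    | inr e =>
      have hne : Nonempty V := hconn.nonempty
      obtain ⟨v₀⟩ := hne
      have hmem : (Sum.inl (v₀, false) : (V × Bool) ⊕ ↥G.edgeSet) ∈ H.support :=
        hH.mem_support _
      have hrtail := H.support_rotate _ hmem
      have hredges := H.rotate_edges _ hmem
      obtain ⟨c, heul, hedges⟩ := forward_inl (H.rotate _ hmem)
        (hrtail.perm.nodup_iff.mpr hndtail)
        (fun z => hrtail.perm.mem_iff.mpr (hmemtail z))
        (fun ⟨v, e', ha, hb⟩ => hnh ⟨v, e', hredges.perm.mem_iff.mp ha,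
          hredges.perm.mem_iff.mp hb⟩)
      refine ⟨v₀, c, heul, ?_⟩
      rw [hedges]
      exact (filterMap_isRotated Sum.getRight? hrtail).map Subtype.val
  · rintro ⟨u, c, heul, hrot⟩ ⟨v, e, h1, h2⟩
    have hmem : (Sum.inr e : (V × Bool) ⊕ ↥G.edgeSet) ∈ H.support := hH.mem_support _
    have hrtail := H.support_rotate _ hmem
    have hredges := H.rotate_edges _ hmem
    exact backward_core (H.rotate _ hmem)
      (hrtail.perm.nodup_iff.mpr hndtail)
      (hredges.perm.mem_iff.mpr h1) (hredges.perm.mem_iff.mpr h2)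
      c heul.isTrail.edges_nodup
      (hrot.trans ((filterMap_isRotated Sum.getRight? hrtail).map Subtype.val).symm)
end

section
/- Let G be a connected 4-regular simple graph with at least two vertices, let H be a Hamiltonian cycle in the subdivided double D(G), and let v be a vertex of G with twin copies (v,0) and (v,1). Then exactly one of the following holds: (i) the edges of H incident to (v,0) or (v,1) form two vertex-disjoint two-edge paths, one centered at (v,0) and one centered at (v,1), whose four endpoints are four distinct subdivision vertices; or (ii) they form a single four-edge path a–(v,i)–b–(v,1−i)–c through three distinct subdivision vertices a, b, c, containing exactly one hairpin. -/
open SimpleGraph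

namespace SDaux

variable {W : Type*} {G' : SimpleGraph W}

/-- In a path, there is at most one edge containing the start vertex. -/
lemma path_start_edge_unique {u w : W} (r : G'.Walk u w) (hr : r.IsPath)
    {f g : Sym2 W} (hf : f ∈ r.edges) (hg : g ∈ r.edges)
    (huf : u ∈ f) (hug : u ∈ g) : f = g := by
  have key : ∀ {f : Sym2 W}, f ∈ r.edges → u ∈ f →
      ∀ {x : W} (h : G'.Adj u x) (r' : G'.Walk x w), r = Walk.cons h r' → f = s(u, x) := by
    intro f hf huf x h r' hrr
    subst hrr
    rw [Walk.edges_cons, List.mem_cons] at hf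
    rcases hf with rfl | hf
    · rfl
    · exfalso
      have hus : u ∈ r'.support := by
        induction f using Sym2.ind with
        | _ p q =>
          rcases Sym2.mem_iff.mp huf with rfl | rfl
          · exact r'.fst_mem_support_of_mem_edges hf
          · exact r'.snd_mem_support_of_mem_edges hf
      rw [Walk.cons_isPath_iff] at hr
      exact hr.2 hus
  cases r with
  | nil => simp at hf
  | cons h r' =>
    rw [key hf huf h r' rfl, key hg hug h r' rfl]

/-- The two edges of a cycle at its base point. -/
lemma cycle_base_edges {y : W} (q : G'.Walk y y) (hq : q.IsCycle) :
    ∃ n₁ n₂ : W, n₁ ≠ n₂ ∧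
      ∀ f : Sym2 W, (f ∈ q.edges ∧ y ∈ f) ↔ (f = s(y, n₁) ∨ f = s(y, n₂)) := by
  cases q with
  | nil => exact absurd rfl hq.ne_nil
  | cons h r =>
    rename_i x₁
    rw [Walk.cons_isCycle_iff] at hq
    have hsP : r.reverse.IsPath := hq.1.reverse
    have hrev : ¬ r.reverse.Nil := Walk.not_nil_of_ne h.ne
    rw [Walk.not_nil_iff] at hrev
    obtain ⟨n₂, hadj2, s', hs⟩ := hrev
    have hmem_rev : ∀ f : Sym2 W, f ∈ r.reverse.edges ↔ f ∈ r.edges := by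
      intro f; rw [Walk.edges_reverse, List.mem_reverse]
    have hn2r : s(y, n₂) ∈ r.edges := by
      rw [← hmem_rev, hs, Walk.edges_cons]; exact List.mem_cons_self
    refine ⟨x₁, n₂, ?_, ?_⟩
    · rintro rfl
      exact hq.2 (by rwa [Sym2.eq_swap] at hn2r ⊢)
    · intro f
      constructor
      · rintro ⟨hf, hyf⟩
        rw [Walk.edges_cons, List.mem_cons] at hf
        rcases hf with rfl | hf
        · exact .inl rfl
        · refine .inr (path_start_edge_unique r.reverse hsP ((hmem_rev f).mpr hf) ?_ hyf ?_)
          · rw [hs, Walk.edges_cons]; exact List.mem_cons_self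
          · exact Sym2.mem_mk_left y n₂
      · rintro (rfl | rfl)
        · exact ⟨by rw [Walk.edges_cons]; exact List.mem_cons_self, Sym2.mem_mk_left _ _⟩
        · exact ⟨by rw [Walk.edges_cons]; exact List.mem_cons_of_mem _ hn2r, Sym2.mem_mk_left _ _⟩

/-- The two edges of a Hamiltonian cycle at any vertex. -/
lemma hamCycle_edges [DecidableEq W] {x : W} (H : G'.Walk x x)
    (hH : H.IsHamiltonianCycle) (y : W) :
    ∃ n₁ n₂ : W, n₁ ≠ n₂ ∧
      ∀ f : Sym2 W, (f ∈ H.edges ∧ y ∈ f) ↔ (f = s(y, n₁) ∨ f = s(y, n₂)) := by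
  have hy : y ∈ H.support := hH.mem_support y
  obtain ⟨n₁, n₂, hne, hiff⟩ := cycle_base_edges (H.rotate y hy) (hH.isCycle.rotate hy)
  refine ⟨n₁, n₂, hne, fun f => ?_⟩
  rw [← hiff f, (H.rotate_edges y hy).mem_iff]

/-- Walks whose edges lie in a "closed" edge list stay in the closed vertex set. -/
lemma closure {E : List (Sym2 W)} {S : Set W}
    (hcl : ∀ p q : W, s(p, q) ∈ E → p ∈ S → q ∈ S) :
    ∀ {u w : W} (p : G'.Walk u w), (∀ f ∈ p.edges, f ∈ E) → u ∈ S →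
      ∀ z ∈ p.support, z ∈ S := by
  intro u w p
  induction p with
  | nil => intro _ hu z hz; rw [Walk.support_nil, List.mem_singleton] at hz; exact hz ▸ hu
  | cons h p ih =>
    intro hE hu z hz
    rw [Walk.support_cons, List.mem_cons] at hz
    rcases hz with rfl | hz
    · exact hu
    · exact ih (fun f hf => hE f (by rw [Walk.edges_cons]; exact List.mem_cons_of_mem _ hf))
        (hcl _ _ (hE _ (by rw [Walk.edges_cons]; exact List.mem_cons_self)) hu) z hz

end SDaux
namespace SDaux

/-- Generic packaging of the incident-edge set. -/
lemma setEq {W : Type*} {L : List (Sym2 W)} {y0 y1 : W} {e1 e2 e3 e4 : Sym2 W}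
    (h0 : ∀ f, (f ∈ L ∧ y0 ∈ f) ↔ (f = e1 ∨ f = e2))
    (h1 : ∀ f, (f ∈ L ∧ y1 ∈ f) ↔ (f = e3 ∨ f = e4)) :
    {f | f ∈ L ∧ (y0 ∈ f ∨ y1 ∈ f)} = ({e1, e2, e3, e4} : Set (Sym2 W)) := by
  ext f
  simp only [Set.mem_setOf_eq, Set.mem_insert_iff, Set.mem_singleton_iff]
  constructor
  · rintro ⟨hf, h | h⟩
    · rcases (h0 f).mp ⟨hf, h⟩ with rfl | rfl
      · exact Or.inl rfl
      · exact Or.inr (Or.inl rfl)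
    · rcases (h1 f).mp ⟨hf, h⟩ with rfl | rfl
      · exact Or.inr (Or.inr (Or.inl rfl))
      · exact Or.inr (Or.inr (Or.inr rfl))
  · rintro (rfl | rfl | rfl | rfl)
    · obtain ⟨hm, hy⟩ := (h0 _).mpr (Or.inl rfl); exact ⟨hm, Or.inl hy⟩
    · obtain ⟨hm, hy⟩ := (h0 _).mpr (Or.inr rfl); exact ⟨hm, Or.inl hy⟩
    · obtain ⟨hm, hy⟩ := (h1 _).mpr (Or.inl rfl); exact ⟨hm, Or.inr hy⟩
    · obtain ⟨hm, hy⟩ := (h1 _).mpr (Or.inr rfl); exact ⟨hm, Or.inr hy⟩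

/-- Neighbors of twin vertices in the subdivided double are subdivision vertices. -/
lemma adj_twin {V : Type} (G : SimpleGraph V) {v : V} {i : Bool}
    {n : (V × Bool) ⊕ ↥G.edgeSet} (h : (subdividedDouble G).Adj (Sum.inl (v, i)) n) :
    ∃ e : G.edgeSet, n = Sum.inr e := by
  rw [subdividedDouble, fromRel_adj] at h
  rcases h.2 with ⟨v', i', e, _, hy, _⟩ | ⟨v', i', e, hx, hy, _⟩
  · exact ⟨e, hy⟩
  · exact absurd hy (by simp)

/-- The degenerate configuration: both twins joined to the same two subdivision
vertices is impossible in a Hamiltonian cycle. -/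
lemma badcase {V : Type} [Fintype V] [DecidableEq V] (G : SimpleGraph V) [DecidableRel G.Adj]
    (hreg : G.IsRegularOfDegree 4) (v : V) (a b : G.edgeSet) (hab : a ≠ b)
    {x : (V × Bool) ⊕ ↥G.edgeSet} (H : (subdividedDouble G).Walk x x)
    (hH : H.IsHamiltonianCycle)
    (iff0 : ∀ f, (f ∈ H.edges ∧ Sum.inl (v, false) ∈ f) ↔
      (f = s(Sum.inl (v, false), Sum.inr a) ∨ f = s(Sum.inl (v, false), Sum.inr b)))
    (iff1 : ∀ f, (f ∈ H.edges ∧ Sum.inl (v, true) ∈ f) ↔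
      (f = s(Sum.inl (v, true), Sum.inr a) ∨ f = s(Sum.inl (v, true), Sum.inr b))) :
    False := by
  classical
  set f0 : (V × Bool) ⊕ ↥G.edgeSet := Sum.inl (v, false) with hf0def
  set f1 : (V × Bool) ⊕ ↥G.edgeSet := Sum.inl (v, true) with hf1def
  have hf01 : f0 ≠ f1 := by simp [hf0def, hf1def]
  set S : Set ((V × Bool) ⊕ ↥G.edgeSet) :=
    {z | z = f0 ∨ z = f1 ∨ z = Sum.inr a ∨ z = Sum.inr b} with hSdef
  -- key: every edge of H at `Sum.inr c` (for c with both twin edges present) goes to a twin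
  have key : ∀ (c : G.edgeSet), s(f0, Sum.inr c) ∈ H.edges → s(f1, Sum.inr c) ∈ H.edges →
      ∀ q, s(Sum.inr c, q) ∈ H.edges → q = f0 ∨ q = f1 := by
    intro c hc0 hc1 q hq
    obtain ⟨n₁, n₂, hne, hiffc⟩ := hamCycle_edges H hH (Sum.inr c)
    have h0 : f0 = n₁ ∨ f0 = n₂ := by
      have := (hiffc s(Sum.inr c, f0)).mp ⟨by rwa [Sym2.eq_swap], Sym2.mem_mk_left _ _⟩
      rcases this with h | h
      · exact Or.inl ((Sym2.congr_right).mp h)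
      · exact Or.inr ((Sym2.congr_right).mp h)
    have h1 : f1 = n₁ ∨ f1 = n₂ := by
      have := (hiffc s(Sum.inr c, f1)).mp ⟨by rwa [Sym2.eq_swap], Sym2.mem_mk_left _ _⟩
      rcases this with h | h
      · exact Or.inl ((Sym2.congr_right).mp h)
      · exact Or.inr ((Sym2.congr_right).mp h)
    have hq' : q = n₁ ∨ q = n₂ := by
      have := (hiffc s(Sum.inr c, q)).mp ⟨hq, Sym2.mem_mk_left _ _⟩
      rcases this with h | h
      · exact Or.inl ((Sym2.congr_right).mp h)
      · exact Or.inr ((Sym2.congr_right).mp h)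
    rcases h0 with rfl | rfl <;> rcases h1 with h1 | h1 <;>
      first
        | exact absurd h1.symm hf01
        | (rcases hq' with rfl | rfl <;> subst h1 <;> tauto)
  have hcl : ∀ p q : (V × Bool) ⊕ ↥G.edgeSet, s(p, q) ∈ H.edges → p ∈ S → q ∈ S := by
    intro p q hpq hp
    have ha0 : s(f0, Sum.inr a) ∈ H.edges := ((iff0 _).mpr (Or.inl rfl)).1
    have hb0 : s(f0, Sum.inr b) ∈ H.edges := ((iff0 _).mpr (Or.inr rfl)).1
    have ha1 : s(f1, Sum.inr a) ∈ H.edges := ((iff1 _).mpr (Or.inl rfl)).1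
    have hb1 : s(f1, Sum.inr b) ∈ H.edges := ((iff1 _).mpr (Or.inr rfl)).1
    rcases hp with rfl | rfl | rfl | rfl
    · rcases (iff0 s(f0, q)).mp ⟨hpq, Sym2.mem_mk_left _ _⟩ with h | h
      · exact Or.inr (Or.inr (Or.inl (Sym2.congr_right.mp h)))
      · exact Or.inr (Or.inr (Or.inr (Sym2.congr_right.mp h)))
    · rcases (iff1 s(f1, q)).mp ⟨hpq, Sym2.mem_mk_left _ _⟩ with h | h
      · exact Or.inr (Or.inr (Or.inl (Sym2.congr_right.mp h)))
      · exact Or.inr (Or.inr (Or.inr (Sym2.congr_right.mp h)))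
    · rcases key a ha0 ha1 q hpq with rfl | rfl
      · exact Or.inl rfl
      · exact Or.inr (Or.inl rfl)
    · rcases key b hb0 hb1 q hpq with rfl | rfl
      · exact Or.inl rfl
      · exact Or.inr (Or.inl rfl)
  -- a third edge of G at v
  have h4 : (G.incidenceFinset v).card = 4 := by
    rw [card_incidenceFinset_eq_degree]; exact hreg v
  have hpos : 0 < (((G.incidenceFinset v).erase (↑a)).erase (↑b)).card := by
    have h1 := Finset.pred_card_le_card_erase
      (s := G.incidenceFinset v) (a := (↑a : Sym2 V))
    have h2 := Finset.pred_card_le_card_erase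
      (s := (G.incidenceFinset v).erase (↑a)) (a := (↑b : Sym2 V))
    omega
  obtain ⟨e, he⟩ := Finset.card_pos.mp hpos
  rw [Finset.mem_erase, Finset.mem_erase, mem_incidenceFinset] at he
  obtain ⟨heb, hea, heE, -⟩ := he
  set ee : G.edgeSet := ⟨e, heE⟩ with heedef
  -- rotate the Hamiltonian cycle to start at f0
  have hf0mem : f0 ∈ H.support := hH.mem_support f0
  have hq_ed : ∀ f ∈ (H.rotate f0 hf0mem).edges, f ∈ H.edges :=
    fun f hf => (H.rotate_edges f0 hf0mem).mem_iff.mp hf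
  have hZtail : Sum.inr ee ∈ H.support.tail := by
    have := hH.isHamiltonian_tail.mem_support (Sum.inr ee)
    rwa [Walk.support_tail_of_not_nil _ hH.isCycle.not_nil] at this
  have hZ : Sum.inr ee ∈ (H.rotate f0 hf0mem).support :=
    List.mem_of_mem_tail (((H.support_rotate f0 hf0mem).mem_iff).mpr hZtail)
  have hins : Sum.inr ee ∈ S :=
    closure hcl (H.rotate f0 hf0mem) hq_ed (Or.inl rfl) _ hZ
  rcases hins with h | h | h | h
  · simp [hf0def] at h
  · simp [hf1def] at h
  · exact hea (congrArg Subtype.val (Sum.inr_injective h))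
  · exact heb (congrArg Subtype.val (Sum.inr_injective h))

end SDaux

namespace SDaux

lemma setEq' {W : Type*} {L : List (Sym2 W)} {y0 y1 : W} {e1 e2 e3 e4 : Sym2 W}
    (h0 : ∀ f, (f ∈ L ∧ y0 ∈ f) ↔ (f = e1 ∨ f = e2))
    (h1 : ∀ f, (f ∈ L ∧ y1 ∈ f) ↔ (f = e3 ∨ f = e4)) :
    {f | f ∈ L ∧ (y0 ∈ f ∨ y1 ∈ f)} = ({e3, e4, e1, e2} : Set (Sym2 W)) := by
  rw [setEq h0 h1]
  ext f
  simp only [Set.mem_insert_iff, Set.mem_singleton_iff]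
  tauto

end SDaux

/-- In a Hamiltonian cycle `H` of the subdivided double, for each vertex `v` of `G`,
exactly one of the following holds: (i) the edges of `H` incident to the twins `(v,0)`,
`(v,1)` form two vertex-disjoint two-edge paths, centered at `(v,0)` and `(v,1)`, whose
endpoints are four distinct subdivision vertices; or (ii) they form a single four-edge path
`a – (v,i) – b – (v,¬i) – c` through three distinct subdivision vertices, containing
exactly one hairpin. -/
theorem subdividedDouble_twin_neighborhood {V : Type} [Fintype V] [DecidableEq V]
    (G : SimpleGraph V) [DecidableRel G.Adj] (hcard : 2 ≤ Fintype.card V)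
    (hconn : G.Connected) (hreg : G.IsRegularOfDegree 4)
    (x : (V × Bool) ⊕ ↥G.edgeSet) (H : (subdividedDouble G).Walk x x)
    (hH : H.IsHamiltonianCycle) (v : V) :
    Xor'
      (∃ a b c d : G.edgeSet, a ≠ b ∧ a ≠ c ∧ a ≠ d ∧ b ≠ c ∧ b ≠ d ∧ c ≠ d ∧
        {f | f ∈ H.edges ∧ (Sum.inl (v, false) ∈ f ∨ Sum.inl (v, true) ∈ f)} =
          ({s(Sum.inl (v, false), Sum.inr a), s(Sum.inl (v, false), Sum.inr b),
            s(Sum.inl (v, true), Sum.inr c), s(Sum.inl (v, true), Sum.inr d)} :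
            Set (Sym2 ((V × Bool) ⊕ ↥G.edgeSet))))
      (∃ (i : Bool) (a b c : G.edgeSet), a ≠ b ∧ a ≠ c ∧ b ≠ c ∧
        {f | f ∈ H.edges ∧ (Sum.inl (v, false) ∈ f ∨ Sum.inl (v, true) ∈ f)} =
          ({s(Sum.inl (v, i), Sum.inr a), s(Sum.inl (v, i), Sum.inr b),
            s(Sum.inl (v, !i), Sum.inr b), s(Sum.inl (v, !i), Sum.inr c)} :
            Set (Sym2 ((V × Bool) ⊕ ↥G.edgeSet)))) := by
  classical
  obtain ⟨n₁, n₂, h12, iffA⟩ := SDaux.hamCycle_edges H hH (Sum.inl (v, false))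
  obtain ⟨a, rfl⟩ := SDaux.adj_twin G (H.adj_of_mem_edges ((iffA _).mpr (Or.inl rfl)).1)
  obtain ⟨b, rfl⟩ := SDaux.adj_twin G (H.adj_of_mem_edges ((iffA _).mpr (Or.inr rfl)).1)
  have hab : a ≠ b := fun h => h12 (by rw [h])
  obtain ⟨m₁, m₂, h12', iffB⟩ := SDaux.hamCycle_edges H hH (Sum.inl (v, true))
  obtain ⟨c, rfl⟩ := SDaux.adj_twin G (H.adj_of_mem_edges ((iffB _).mpr (Or.inl rfl)).1)
  obtain ⟨d, rfl⟩ := SDaux.adj_twin G (H.adj_of_mem_edges ((iffB _).mpr (Or.inr rfl)).1)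
  have hcd : c ≠ d := fun h => h12' (by rw [h])
  have main :
      (∃ a b c d : G.edgeSet, a ≠ b ∧ a ≠ c ∧ a ≠ d ∧ b ≠ c ∧ b ≠ d ∧ c ≠ d ∧
        {f | f ∈ H.edges ∧ (Sum.inl (v, false) ∈ f ∨ Sum.inl (v, true) ∈ f)} =
          ({s(Sum.inl (v, false), Sum.inr a), s(Sum.inl (v, false), Sum.inr b),
            s(Sum.inl (v, true), Sum.inr c), s(Sum.inl (v, true), Sum.inr d)} :
            Set (Sym2 ((V × Bool) ⊕ ↥G.edgeSet)))) ∨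
      (∃ (i : Bool) (a b c : G.edgeSet), a ≠ b ∧ a ≠ c ∧ b ≠ c ∧
        {f | f ∈ H.edges ∧ (Sum.inl (v, false) ∈ f ∨ Sum.inl (v, true) ∈ f)} =
          ({s(Sum.inl (v, i), Sum.inr a), s(Sum.inl (v, i), Sum.inr b),
            s(Sum.inl (v, !i), Sum.inr b), s(Sum.inl (v, !i), Sum.inr c)} :
            Set (Sym2 ((V × Bool) ⊕ ↥G.edgeSet)))) := by
    by_cases hca : c = a
    · subst hca
      by_cases hdb : d = b
      · subst hdb
        exact (SDaux.badcase G hreg v c d hab H hH iffA iffB).elim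
      · refine Or.inr ⟨false, b, c, d, hab.symm, fun h => hdb h.symm, hcd, ?_⟩
        simp only [Bool.not_false]
        exact SDaux.setEq (fun f => (iffA f).trans or_comm) iffB
    · by_cases hcb : c = b
      · subst hcb
        by_cases hda : d = a
        · subst hda
          exact (SDaux.badcase G hreg v d c hab H hH iffA
            (fun f => (iffB f).trans or_comm)).elim
        · refine Or.inr ⟨false, a, c, d, hab, fun h => hda h.symm, hcd, ?_⟩
          simp only [Bool.not_false]
          exact SDaux.setEq iffA iffB
      · by_cases hda : d = a
        · subst hda
          refine Or.inr ⟨true, c, d, b, hcd, hcb, hab, ?_⟩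
          simp only [Bool.not_true]
          exact SDaux.setEq' iffA iffB
        · by_cases hdb : d = b
          · subst hdb
            refine Or.inr ⟨true, c, d, a, hcd, hca, hab.symm, ?_⟩
            simp only [Bool.not_true]
            exact SDaux.setEq' (fun f => (iffA f).trans or_comm) iffB
          · exact Or.inl ⟨a, b, c, d, hab, fun h => hca h.symm, fun h => hda h.symm,
              fun h => hcb h.symm, fun h => hdb h.symm, hcd, SDaux.setEq iffA iffB⟩
  have hPQ : ∀ _ : (∃ a b c d : G.edgeSet, a ≠ b ∧ a ≠ c ∧ a ≠ d ∧ b ≠ c ∧ b ≠ d ∧ c ≠ d ∧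
        {f | f ∈ H.edges ∧ (Sum.inl (v, false) ∈ f ∨ Sum.inl (v, true) ∈ f)} =
          ({s(Sum.inl (v, false), Sum.inr a), s(Sum.inl (v, false), Sum.inr b),
            s(Sum.inl (v, true), Sum.inr c), s(Sum.inl (v, true), Sum.inr d)} :
            Set (Sym2 ((V × Bool) ⊕ ↥G.edgeSet)))),
      ∀ _ : (∃ (i : Bool) (a b c : G.edgeSet), a ≠ b ∧ a ≠ c ∧ b ≠ c ∧
        {f | f ∈ H.edges ∧ (Sum.inl (v, false) ∈ f ∨ Sum.inl (v, true) ∈ f)} =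
          ({s(Sum.inl (v, i), Sum.inr a), s(Sum.inl (v, i), Sum.inr b),
            s(Sum.inl (v, !i), Sum.inr b), s(Sum.inl (v, !i), Sum.inr c)} :
            Set (Sym2 ((V × Bool) ⊕ ↥G.edgeSet)))), False := by
    rintro ⟨a', b', c', d', h1, h2, h3, h4, h5, h6, hset⟩ ⟨i, A, B, C, _, _, _, hset'⟩
    have heq2 := hset.symm.trans hset'
    cases i
    · have hm1 : B = a' ∨ B = b' := by
        have := (Set.ext_iff.mp heq2 s(Sum.inl (v, false), Sum.inr B)).mpr (by simp)
        simpa [Sym2.eq_iff] using this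
      have hm2 : B = c' ∨ B = d' := by
        have := (Set.ext_iff.mp heq2 s(Sum.inl (v, true), Sum.inr B)).mpr (by simp)
        simpa [Sym2.eq_iff] using this
      rcases hm1 with rfl | rfl
      · rcases hm2 with h | h
        · exact h2 h
        · exact h3 h
      · rcases hm2 with h | h
        · exact h4 h
        · exact h5 h
    · have hm1 : B = c' ∨ B = d' := by
        have := (Set.ext_iff.mp heq2 s(Sum.inl (v, true), Sum.inr B)).mpr (by simp)
        simpa [Sym2.eq_iff] using this
      have hm2 : B = a' ∨ B = b' := by
        have := (Set.ext_iff.mp heq2 s(Sum.inl (v, false), Sum.inr B)).mpr (by simp)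
        simpa [Sym2.eq_iff] using this
      rcases hm1 with rfl | rfl
      · rcases hm2 with h | h
        · exact h2 h.symm
        · exact h4 h.symm
      · rcases hm2 with h | h
        · exact h3 h.symm
        · exact h5 h.symm
  rcases main with h | h
  · exact Or.inl ⟨h, fun h' => hPQ h h'⟩
  · exact Or.inr ⟨h, fun h' => hPQ h' h⟩
end

section
/- Let G be a connected 4-regular simple graph with at least two vertices, let H be a Hamiltonian cycle in the subdivided double D(G), and let v be a vertex of G. Then H contains a hairpin through the twin pair (v,0), (v,1) if and only if the complement of H in D(G) (the 2-regular spanning subgraph of D(G) whose edge set is E(D(G)) \ E(H)) contains a hairpin through the twin pair (v,0), (v,1). -/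
open SimpleGraph

private lemma countP_path_aux {V : Type*} [DecidableEq V] {G : SimpleGraph V} (x : V)
    {a b : V} (q : G.Walk a b) :
    q.IsPath → x ∈ q.support →
      q.edges.countP (fun e => x ∈ e) =
        (if x = a then 0 else 1) + (if x = b then 0 else 1) := by
  induction q with
  | nil =>
    intro _ hx
    simp only [Walk.support_nil, List.mem_singleton] at hx
    subst hx
    simp
  | @cons a c b h q ih =>
    intro hp hx
    rw [Walk.cons_isPath_iff] at hp
    obtain ⟨hq, ha⟩ := hp
    have hab : a ≠ b := fun hab => ha (hab ▸ q.end_mem_support)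
    rw [Walk.edges_cons, List.countP_cons]
    by_cases hxa : x = a
    · subst hxa
      have h0 : q.edges.countP (fun e => x ∈ e) = 0 := by
        rw [List.countP_eq_zero]
        intro e he
        simp only [decide_eq_true_eq]
        intro hxe
        obtain ⟨y, rfl⟩ := Sym2.mem_iff_exists.mp hxe
        exact ha (q.fst_mem_support_of_mem_edges he)
      simp [h0, hab, Sym2.mem_iff]
    · have hxq : x ∈ q.support := by
        rw [Walk.support_cons] at hx
        rcases List.mem_cons.mp hx with h1 | h1
        · exact absurd h1 hxa
        · exact h1
      rw [ih hq hxq]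
      by_cases hxc : x = c <;> simp [hxa, hxc, Sym2.mem_iff, h.ne'] <;> omega

private lemma countP_cycle {V : Type*} [DecidableEq V] {G : SimpleGraph V} {u : V}
    (p : G.Walk u u) (hp : p.IsCycle) (x : V) (hx : x ∈ p.support) :
    p.edges.countP (fun e => x ∈ e) = 2 := by
  have hperm : ((p.rotate x hx).edges).Perm p.edges := (p.rotate_edges x hx).perm
  rw [← hperm.countP_eq]
  have hq : (p.rotate x hx).IsCycle := hp.rotate hx
  generalize p.rotate x hx = q at hq ⊢
  cases q with
  | nil => exact absurd rfl hq.ne_nil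
  | @cons _ c _ h r =>
    rw [Walk.cons_isCycle_iff] at hq
    rw [Walk.edges_cons, List.countP_cons]
    rw [countP_path_aux x r hq.1 r.end_mem_support]
    simp [h.ne, Sym2.mem_iff]

private lemma adj_inl_iff {V : Type*} {G : SimpleGraph V} (v : V) (i : Bool)
    (y : (V × Bool) ⊕ ↥G.edgeSet) :
    (subdividedDouble G).Adj (Sum.inl (v, i)) y ↔
      ∃ e : G.edgeSet, y = Sum.inr e ∧ v ∈ (e : Sym2 V) := by
  rw [subdividedDouble, fromRel_adj]
  constructor
  · rintro ⟨hne, h | h⟩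
    · obtain ⟨w, j, e, hx, hy, hw⟩ := h
      obtain ⟨rfl, rfl⟩ : v = w ∧ i = j := by
        have := Sum.inl.inj hx
        exact ⟨congrArg Prod.fst this, congrArg Prod.snd this⟩
      exact ⟨e, hy, hw⟩
    · obtain ⟨w, j, e, hx, hy, hw⟩ := h
      exact absurd hy (by simp)
  · rintro ⟨e, rfl, hv⟩
    exact ⟨by simp, Or.inl ⟨v, i, e, rfl, rfl, hv⟩⟩

private lemma card_filter_mem_edges {V : Type} [Fintype V] [DecidableEq V]
    (G : SimpleGraph V) [DecidableRel G.Adj]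
    {x : (V × Bool) ⊕ ↥G.edgeSet} (H : (subdividedDouble G).Walk x x)
    (hH : H.IsHamiltonianCycle) (v : V) (i : Bool) :
    (Finset.univ.filter
      (fun e : G.edgeSet => s(Sum.inl (v, i), Sum.inr e) ∈ H.edges)).card = 2 := by
  classical
  set x0 : (V × Bool) ⊕ ↥G.edgeSet := Sum.inl (v, i) with hx0def
  have hx0 : x0 ∈ H.support := hH.mem_support x0
  have hcnt := countP_cycle H hH.isCycle x0 hx0
  have hinj : Function.Injective (fun e : G.edgeSet => s(x0, Sum.inr e)) := by
    intro e f hef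
    exact Sum.inr.inj (Sym2.congr_right.mp hef)
  have himg : (Finset.univ.filter
        (fun e : G.edgeSet => s(x0, Sum.inr e) ∈ H.edges)).image
        (fun e => s(x0, Sum.inr e)) =
      H.edges.toFinset.filter (fun f => x0 ∈ f) := by
    ext f
    simp only [Finset.mem_image, Finset.mem_filter, Finset.mem_univ, true_and,
      List.mem_toFinset]
    constructor
    · rintro ⟨e, he, rfl⟩
      exact ⟨he, by simp [Sym2.mem_iff]⟩
    · rintro ⟨hf, hxf⟩
      obtain ⟨y, rfl⟩ := Sym2.mem_iff_exists.mp hxf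
      have hadj : (subdividedDouble G).Adj x0 y :=
        (subdividedDouble G).mem_edgeSet.mp (H.edges_subset_edgeSet hf)
      obtain ⟨e, rfl, hv⟩ := (adj_inl_iff v i y).mp (hx0def ▸ hadj)
      exact ⟨e, hf, rfl⟩
  have hnodup : H.edges.Nodup := hH.isCycle.edges_nodup
  have h1 : (Finset.univ.filter
        (fun e : G.edgeSet => s(x0, Sum.inr e) ∈ H.edges)).card =
      (H.edges.toFinset.filter (fun f => x0 ∈ f)).card := by
    rw [← himg, Finset.card_image_of_injective _ hinj]
  have h2 : (H.edges.toFinset.filter (fun f => x0 ∈ f)).card =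
      H.edges.countP (fun f => x0 ∈ f) := by
    rw [List.countP_eq_length_filter,
      ← List.toFinset_card_of_nodup (hnodup.filter _)]
    congr 1
    ext f
    simp [List.mem_filter]
  rw [h1, h2, hcnt]

/-- A Hamiltonian cycle `H` of the subdivided double contains a hairpin through the twin
pair `(v,0)`, `(v,1)` if and only if its complement (the spanning subgraph of `D(G)` on the
edges of `D(G)` not used by `H`) contains a hairpin through the same twin pair. -/
theorem subdividedDouble_hairpin_iff_complement_hairpin {V : Type} [Fintype V] [DecidableEq V]
    (G : SimpleGraph V) [DecidableRel G.Adj] (hcard : 2 ≤ Fintype.card V)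
    (hconn : G.Connected) (hreg : G.IsRegularOfDegree 4)
    (x : (V × Bool) ⊕ ↥G.edgeSet) (H : (subdividedDouble G).Walk x x)
    (hH : H.IsHamiltonianCycle) (v : V) :
    (∃ e : G.edgeSet,
        s(Sum.inl (v, false), Sum.inr e) ∈ H.edges ∧
        s(Sum.inl (v, true), Sum.inr e) ∈ H.edges) ↔
      (∃ e : G.edgeSet,
        (s(Sum.inl (v, false), Sum.inr e) ∈ (subdividedDouble G).edgeSet ∧
          s(Sum.inl (v, false), Sum.inr e) ∉ H.edges) ∧
        (s(Sum.inl (v, true), Sum.inr e) ∈ (subdividedDouble G).edgeSet ∧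
          s(Sum.inl (v, true), Sum.inr e) ∉ H.edges)) := by
  classical
  set S : Finset G.edgeSet := Finset.univ.filter (fun e => v ∈ (e : Sym2 V)) with hSdef
  set A : Finset G.edgeSet := Finset.univ.filter
    (fun e => s(Sum.inl (v, false), Sum.inr e) ∈ H.edges) with hAdef
  set B : Finset G.edgeSet := Finset.univ.filter
    (fun e => s(Sum.inl (v, true), Sum.inr e) ∈ H.edges) with hBdef
  -- edge set membership for incident pairs
  have hedge : ∀ (i : Bool) (e : G.edgeSet), v ∈ (e : Sym2 V) →
      s(Sum.inl (v, i), Sum.inr e) ∈ (subdividedDouble G).edgeSet := by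
    intro i e hv
    exact (subdividedDouble G).mem_edgeSet.mpr ((adj_inl_iff v i _).mpr ⟨e, rfl, hv⟩)
  have hmem : ∀ (i : Bool) (e : G.edgeSet) (f : Sym2 ((V × Bool) ⊕ ↥G.edgeSet)),
      f = s(Sum.inl (v, i), Sum.inr e) → f ∈ H.edges → v ∈ (e : Sym2 V) := by
    intro i e f hf hfe
    subst hf
    have hadj := (subdividedDouble G).mem_edgeSet.mp (H.edges_subset_edgeSet hfe)
    obtain ⟨e', he', hv⟩ := (adj_inl_iff v i _).mp hadj
    obtain rfl : e = e' := Sum.inr.inj he'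
    exact hv
  -- cardinalities
  have hS : S.card = 4 := by
    have himg : S.image Subtype.val = G.incidenceFinset v := by
      ext f
      simp only [Finset.mem_image, hSdef, Finset.mem_filter, Finset.mem_univ, true_and,
        mem_incidenceFinset, mk'_mem_incidenceSet_iff]
      constructor
      · rintro ⟨⟨f, hf⟩, hv, rfl⟩
        exact ⟨hf, hv⟩
      · rintro ⟨hf, hv⟩
        exact ⟨⟨f, hf⟩, hv, rfl⟩
    have := congrArg Finset.card himg
    rwa [Finset.card_image_of_injective _ Subtype.val_injective,
      card_incidenceFinset_eq_degree, hreg v] at this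
  have hA : A.card = 2 := card_filter_mem_edges G H hH v false
  have hB : B.card = 2 := card_filter_mem_edges G H hH v true
  have hAS : A ⊆ S := by
    intro e he
    rw [hAdef, Finset.mem_filter] at he
    rw [hSdef, Finset.mem_filter]
    exact ⟨Finset.mem_univ _, hmem false e _ rfl he.2⟩
  have hBS : B ⊆ S := by
    intro e he
    rw [hBdef, Finset.mem_filter] at he
    rw [hSdef, Finset.mem_filter]
    exact ⟨Finset.mem_univ _, hmem true e _ rfl he.2⟩
  have hUS : A ∪ B ⊆ S := Finset.union_subset hAS hBS
  have hcount : (A ∩ B).card = ((S \ A) ∩ (S \ B)).card := by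
    have h1 : (A ∪ B).card + (A ∩ B).card = 4 := by
      rw [Finset.card_union_add_card_inter, hA, hB]
    have h2 : (S \ A) ∩ (S \ B) = S \ (A ∪ B) := (Finset.sdiff_union_distrib S A B).symm
    have h3 : (S \ (A ∪ B)).card = 4 - (A ∪ B).card := by
      rw [Finset.card_sdiff_of_subset hUS, hS]
    have h4 : (A ∪ B).card ≤ 4 := hS ▸ Finset.card_le_card hUS
    rw [h2, h3]
    omega
  constructor
  · rintro ⟨e, h1, h2⟩
    have heAB : e ∈ A ∩ B := by
      rw [Finset.mem_inter, hAdef, hBdef]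
      exact ⟨Finset.mem_filter.mpr ⟨Finset.mem_univ _, h1⟩,
        Finset.mem_filter.mpr ⟨Finset.mem_univ _, h2⟩⟩
    have hpos : 0 < ((S \ A) ∩ (S \ B)).card := by
      rw [← hcount]
      exact Finset.card_pos.mpr ⟨e, heAB⟩
    obtain ⟨e', he'⟩ := Finset.card_pos.mp hpos
    rw [Finset.mem_inter, Finset.mem_sdiff, Finset.mem_sdiff] at he'
    obtain ⟨⟨heS, heA⟩, _, heB⟩ := he'
    rw [hSdef, Finset.mem_filter] at heS
    rw [hAdef, Finset.mem_filter] at heA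
    rw [hBdef, Finset.mem_filter] at heB
    refine ⟨e', ⟨hedge false e' heS.2, fun hc => heA ⟨Finset.mem_univ _, hc⟩⟩,
      ⟨hedge true e' heS.2, fun hc => heB ⟨Finset.mem_univ _, hc⟩⟩⟩
  · rintro ⟨e, ⟨hE1, hN1⟩, ⟨hE2, hN2⟩⟩
    have hv : v ∈ (e : Sym2 V) := by
      have hadj := (subdividedDouble G).mem_edgeSet.mp hE1
      obtain ⟨e', he', hv⟩ := (adj_inl_iff v false _).mp hadj
      obtain rfl : e = e' := Sum.inr.inj he'
      exact hv
    have heS : e ∈ S := by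
      rw [hSdef, Finset.mem_filter]; exact ⟨Finset.mem_univ _, hv⟩
    have he : e ∈ (S \ A) ∩ (S \ B) := by
      rw [Finset.mem_inter, Finset.mem_sdiff, Finset.mem_sdiff, hAdef, hBdef]
      refine ⟨⟨heS, ?_⟩, heS, ?_⟩
      · intro hc; exact hN1 (Finset.mem_filter.mp hc).2
      · intro hc; exact hN2 (Finset.mem_filter.mp hc).2
    have hpos : 0 < (A ∩ B).card := by
      rw [hcount]
      exact Finset.card_pos.mpr ⟨e, he⟩
    obtain ⟨e', he'⟩ := Finset.card_pos.mp hpos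
    rw [Finset.mem_inter, hAdef, hBdef, Finset.mem_filter, Finset.mem_filter] at he'
    exact ⟨e', he'.1.2, he'.2.2⟩
end

section
/- Let G be a 4-regular simple graph and let v be a vertex of G such that the edge set of the vertex-deleted subgraph G − v can be partitioned into two linear forests. Then G has a Hamiltonian decomposition: its edge set can be partitioned into two Hamiltonian cycles. (Indeed, the two linear forests are necessarily two Hamiltonian paths of G − v whose endpoints are the four neighbors of v, and adding v back joins each path into a Hamiltonian cycle of G.) -/
open SimpleGraph

/-- A linear forest: an acyclic graph of maximum degree at most two, i.e. a
vertex-disjoint union of paths. -/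
def IsLinearForest {W : Type*} (F : SimpleGraph W) : Prop :=
  F.IsAcyclic ∧ ∀ v, (F.neighborSet v).ncard ≤ 2

namespace HamAux

section Part1
variable {V : Type*} {H : SimpleGraph V}

lemma eq_nil_of_isPath_loop {b : V} {r : H.Walk b b} (hr : r.IsPath) : r = Walk.nil := by
  cases r with
  | nil => rfl
  | cons h q =>
    rw [Walk.cons_isPath_iff] at hr
    exact absurd q.end_mem_support hr.2

lemma edge_start {a b x : V} (p : H.Walk a b) (hp : p.IsPath) (hx : s(a, x) ∈ p.edges) :
    x = p.getVert 1 := by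
  cases p with
  | nil => simp at hx
  | cons h q =>
    rw [Walk.edges_cons, List.mem_cons] at hx
    rcases hx with hx | hx
    · rw [Sym2.eq_iff] at hx
      rcases hx with ⟨-, rfl⟩ | ⟨rfl, rfl⟩
      · simp [Walk.getVert_cons_succ]
      · exact absurd rfl h.ne
    · rw [Walk.cons_isPath_iff] at hp
      exact absurd (q.fst_mem_support_of_mem_edges hx) hp.2

lemma getVert_one_mem_tail {a b : V} (p : H.Walk a b) (hp : ¬ p.Nil) :
    p.getVert 1 ∈ p.support.tail := by
  cases p with
  | nil => exact absurd Walk.Nil.nil hp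
  | cons h q => simpa [Walk.getVert_cons_succ] using q.start_mem_support

lemma getVert_one_append {a b c : V} (p : H.Walk a b) (q : H.Walk b c) (hp : ¬ p.Nil) :
    (p.append q).getVert 1 = p.getVert 1 := by
  rw [Walk.getVert_append]
  rw [Walk.not_nil_iff_lt_length] at hp
  rcases Nat.lt_or_ge 1 p.length with h1 | h1
  · rw [if_pos h1]
  · have hl : p.length = 1 := le_antisymm h1 hp
    rw [if_neg (by omega), hl, Nat.sub_self, Walk.getVert_zero]
    have := p.getVert_length
    rw [hl] at this
    exact this.symm

/-- Every finite graph has a maximal path from any vertex. -/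
lemma exists_maximal_path [Fintype V] (a : V) :
    ∃ (b : V) (p : H.Walk a b), p.IsPath ∧ ∀ w, H.Adj b w → w ∈ p.support := by
  by_contra hcon
  push_neg at hcon
  have key : ∀ (n : ℕ) (b : V) (p : H.Walk a b), p.IsPath → Fintype.card V ≤ p.length + n → False := by
    intro n
    induction n with
    | zero => intro b p hp hlen; exact absurd hp.length_lt (by omega)
    | succ n ih =>
      intro b p hp hlen
      obtain ⟨w, hadj, hw⟩ := hcon b p hp
      have hp' : (p.concat hadj).IsPath := by
        rw [← Walk.isPath_reverse_iff, Walk.reverse_concat]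
        rw [Walk.cons_isPath_iff]
        refine ⟨(Walk.isPath_reverse_iff p).mpr hp, ?_⟩
        rw [Walk.support_reverse, List.mem_reverse]
        exact hw
      exact ih w (p.concat hadj) hp' (by rw [Walk.length_concat]; omega)
  exact key (Fintype.card V) a Walk.nil (Walk.IsPath.nil) (by simp)

lemma cycle_two_edges {x : V} (w : H.Walk x x) (hw : w.IsCycle) :
    ∃ d e, d ≠ e ∧ s(x, d) ∈ w.edges ∧ s(x, e) ∈ w.edges := by
  obtain ⟨d, h, q, rfl⟩ := Walk.not_nil_iff.mp hw.not_nil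
  rw [Walk.cons_isCycle_iff] at hw
  obtain ⟨hq, hne⟩ := hw
  have hqnil : ¬ q.Nil := Walk.not_nil_of_ne h.ne'
  have hrnil : ¬ q.reverse.Nil := by
    rw [Walk.nil_iff_length_eq, Walk.length_reverse, ← Walk.nil_iff_length_eq]
    exact hqnil
  obtain ⟨e, h', r, hqr⟩ := Walk.not_nil_iff.mp hrnil
  have hemem : s(x, e) ∈ q.edges := by
    have : s(x, e) ∈ q.reverse.edges := by rw [hqr]; simp
    rwa [Walk.edges_reverse, List.mem_reverse] at this
  refine ⟨d, e, ?_, by simp, List.mem_cons_of_mem _ hemem⟩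
  intro hde
  subst hde
  exact hne hemem

variable [DecidableEq V]

lemma adj_edge_mem_of_cycle {b : V} {w : H.Walk b b} (hw : w.IsCycle)
    (hreg : ∀ u : V, ∃ x y, x ≠ y ∧ H.neighborSet u = {x, y})
    {s t : V} (hs : s ∈ w.support) (hadj : H.Adj s t) : s(s, t) ∈ w.edges := by
  have hrot := hw.rotate hs
  obtain ⟨d, e, hde, hd, he⟩ := cycle_two_edges (w.rotate s hs) hrot
  have hmem : ∀ z, s(s, z) ∈ (w.rotate s hs).edges → z ∈ H.neighborSet s := by
    intro z hz
    exact ((w.rotate s hs).edges_subset_edgeSet hz : H.Adj s z)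
  obtain ⟨x0, y0, hxy, hNs⟩ := hreg s
  have hmem' : ∀ z, z ∈ H.neighborSet s → z = x0 ∨ z = y0 := by
    intro z hz; rw [hNs] at hz; simpa using hz
  have key : t = d ∨ t = e := by
    by_cases ht1 : t = d
    · exact Or.inl ht1
    by_cases ht2 : t = e
    · exact Or.inr ht2
    exfalso
    have h1 := hmem' t hadj
    have h2 := hmem' d (hmem d hd)
    have h3 := hmem' e (hmem e he)
    rcases h1 with rfl | rfl <;> rcases h2 with h2 | h2 <;> rcases h3 with h3 | h3 <;> simp_all
  have : s(s, t) ∈ (w.rotate s hs).edges := by rcases key with rfl | rfl <;> assumption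
  exact ((w.rotate_edges s hs).perm.mem_iff).mp this

lemma cycle_support_all {b : V} {w : H.Walk b b} (hw : w.IsCycle)
    (hreg : ∀ u : V, ∃ x y, x ≠ y ∧ H.neighborSet u = {x, y})
    (hconn : H.Preconnected) : ∀ u, u ∈ w.support := by
  have step : ∀ (x u : V) (p : H.Walk x u), x ∈ w.support → u ∈ w.support := by
    intro x u p
    induction p with
    | nil => exact id
    | cons h q ih =>
      intro hx
      exact ih (w.snd_mem_support_of_mem_edges (adj_edge_mem_of_cycle hw hreg hx h))
  intro u
  obtain ⟨p⟩ := hconn b u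
  exact step b u p w.start_mem_support

end Part1

section Part3
variable {V : Type*} {H : SimpleGraph V} [DecidableEq V]

/-- The endpoint of a maximal path in an acyclic graph has at most one neighbor. -/
lemma maximal_path_end_nbrs (hac : H.IsAcyclic) {a b : V} (p : H.Walk a b) (hp : p.IsPath)
    (hmax : ∀ w, H.Adj b w → w ∈ p.support) :
    H.neighborSet b ⊆ {p.reverse.getVert 1} := by
  intro c hc
  have hadj : H.Adj b c := hc
  rw [Set.mem_singleton_iff]
  by_contra hne
  have hpnil : ¬ p.Nil := by
    intro hnil
    have hsupp := Walk.nil_iff_support_eq.mp hnil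
    have hcs : c ∈ p.support := hmax c hadj
    have hbs : b ∈ p.support := p.end_mem_support
    rw [hsupp, List.mem_singleton] at hcs hbs
    exact hadj.ne (hbs.trans hcs.symm)
  have hprpath : p.reverse.IsPath := (Walk.isPath_reverse_iff p).mpr hp
  have hcsup : c ∈ p.reverse.support := by
    rw [Walk.support_reverse, List.mem_reverse]; exact hmax c hadj
  set q := p.reverse.takeUntil c hcsup with hqdef
  have hqpath : q.IsPath := hprpath.takeUntil hcsup
  have hqnil : ¬ q.Nil := Walk.not_nil_of_ne hadj.ne
  have hedge : s(c, b) ∉ q.edges := by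
    intro hmem
    have hc1 : c = q.getVert 1 :=
      edge_start q hqpath (by rwa [Sym2.eq_swap] at hmem)
    have hgv : q.getVert 1 = p.reverse.getVert 1 := by
      have hspec := p.reverse.take_spec hcsup
      have h2 := getVert_one_append q (p.reverse.dropUntil c hcsup) hqnil
      rw [← hqdef] at hspec
      rw [hspec] at h2
      exact h2.symm
    exact hne (hc1.trans hgv)
  exact hac _ ((Walk.cons_isCycle_iff q hadj.symm).mpr ⟨hqpath, hedge⟩)

end Part3

section Part4
variable {V : Type*} {H : SimpleGraph V} [DecidableEq V]

lemma hamiltonian_of_two_regular [Fintype V]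
    (hconn : H.Connected)
    (hreg : ∀ u : V, ∃ x y, x ≠ y ∧ H.neighborSet u = {x, y}) :
    ∃ (b : V) (w : H.Walk b b), w.IsHamiltonianCycle ∧ ∀ e ∈ H.edgeSet, e ∈ w.edges := by
  obtain ⟨a⟩ := hconn.nonempty
  obtain ⟨b, p, hp, hmax⟩ := exists_maximal_path (H := H) a
  have hadj_of_mem : ∀ u z, z ∈ H.neighborSet u → H.Adj u z := fun _ _ h => h
  -- p is non-nil
  have hpnil : ¬ p.Nil := by
    intro hnil
    have hsupp := Walk.nil_iff_support_eq.mp hnil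
    obtain ⟨x0, y0, hxy, hN⟩ := hreg b
    have hx0 : H.Adj b x0 := by rw [← mem_neighborSet, hN]; exact Set.mem_insert _ _
    have := hmax x0 hx0
    rw [hsupp, List.mem_singleton] at this
    have hba : a = b := hnil.eq
    exact hx0.ne (hba.symm.trans this.symm)
  have hprnil : ¬ p.reverse.Nil := by
    rw [Walk.nil_iff_length_eq, Walk.length_reverse, ← Walk.nil_iff_length_eq]; exact hpnil
  set pen := p.reverse.getVert 1 with hpen
  have hpen_adj : H.Adj b pen := Walk.adj_snd hprnil
  obtain ⟨x0, y0, hxy, hNb⟩ := hreg b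
  -- find the other neighbor c of b
  obtain ⟨c, hc_adj, hc_ne_pen⟩ : ∃ c, H.Adj b c ∧ c ≠ pen := by
    have hpenN : pen ∈ ({x0, y0} : Set V) := by rw [← hNb]; exact hpen_adj
    rcases hpenN with h | h
    · refine ⟨y0, ?_, ?_⟩
      · rw [← mem_neighborSet, hNb]; exact Set.mem_insert_of_mem _ rfl
      · rw [← h] at hxy; exact fun hh => hxy hh.symm
    · rw [Set.mem_singleton_iff] at h
      refine ⟨x0, ?_, ?_⟩
      · rw [← mem_neighborSet, hNb]; exact Set.mem_insert _ _
      · rw [← h] at hxy; exact hxy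
  have hc_sup : c ∈ p.support := hmax c hc_adj
  have hcb : c ≠ b := hc_adj.ne'
  -- c must equal a
  have hca : c = a := by
    by_contra hca
    set q₁ := p.takeUntil c hc_sup with hq₁def
    set q₂ := p.dropUntil c hc_sup with hq₂def
    have hspec : q₁.append q₂ = p := p.take_spec hc_sup
    have hq₁ : q₁.IsPath := hp.takeUntil hc_sup
    have hq₂ : q₂.IsPath := hp.dropUntil hc_sup
    have hq₁nil : ¬ q₁.Nil := Walk.not_nil_of_ne (fun h => hca h.symm)
    have hq₂nil : ¬ q₂.Nil := Walk.not_nil_of_ne hcb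
    have hq₁rnil : ¬ q₁.reverse.Nil := by
      rw [Walk.nil_iff_length_eq, Walk.length_reverse, ← Walk.nil_iff_length_eq]; exact hq₁nil
    set x := q₁.reverse.getVert 1 with hxdef
    have hx_adj : H.Adj c x := Walk.adj_snd hq₁rnil
    have hx_mem : x ∈ q₁.support := by
      have := getVert_one_mem_tail q₁.reverse hq₁rnil
      have h2 : x ∈ q₁.reverse.support := List.mem_of_mem_tail this
      rwa [Walk.support_reverse, List.mem_reverse] at h2
    set y := q₂.getVert 1 with hydef
    have hy_adj : H.Adj c y := Walk.adj_snd hq₂nil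
    have hy_mem : y ∈ q₂.support.tail := getVert_one_mem_tail q₂ hq₂nil
    have hb_mem : b ∈ q₂.support.tail := by
      have hbs : b ∈ q₂.support := q₂.end_mem_support
      rw [q₂.support_eq_cons, List.mem_cons] at hbs
      rcases hbs with h | h
      · exact absurd h.symm hcb
      · exact h
    -- nodup facts
    have hnodup : (q₁.support ++ q₂.support.tail).Nodup := by
      rw [← Walk.support_append, hspec]; exact hp.support_nodup
    rw [List.nodup_append] at hnodup
    have hdisj := hnodup.2.2
    have hxy' : x ≠ y := fun h => hdisj x hx_mem y hy_mem h
    have hxb : x ≠ b := fun h => hdisj x hx_mem b hb_mem h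
    have hyb : y ≠ b := by
      intro h
      -- then q₂ has length 1, so c = pen
      have hq₂1 : q₂.length = 1 := by
        obtain ⟨d, hd, r, hq₂eq⟩ := Walk.not_nil_iff.mp hq₂nil
        have hdy : d = y := by rw [hydef, hq₂eq]; simp [Walk.getVert_cons_succ]
        have hrbb : r.copy (by rw [hdy, h]) rfl = Walk.nil := by
          apply eq_nil_of_isPath_loop
          rw [Walk.isPath_copy]
          have := hq₂
          rw [hq₂eq, Walk.cons_isPath_iff] at this
          exact this.1
        have : r.length = 0 := by
          have := congrArg Walk.length hrbb
          simpa using this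
        rw [hq₂eq]; simp [this]
      have hpenc : pen = c := by
        have hlen : p.length = q₁.length + q₂.length := by
          rw [← hspec, Walk.length_append]
        rw [hpen, Walk.getVert_reverse]
        rw [hlen, hq₂1]
        have : q₁.length + 1 - 1 = q₁.length := by omega
        rw [this, ← hspec, Walk.getVert_append, if_neg (lt_irrefl _), Nat.sub_self,
          Walk.getVert_zero]
      exact hc_ne_pen hpenc.symm
    -- now x, y, b are three distinct neighbors of c
    obtain ⟨u0, v0, huv, hNc⟩ := hreg c
    have hmem' : ∀ z, H.Adj c z → z = u0 ∨ z = v0 := by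
      intro z hz
      have : z ∈ ({u0, v0} : Set V) := by rw [← hNc]; exact hz
      simpa using this
    have h1 := hmem' x hx_adj
    have h2 := hmem' y hy_adj
    have h3 := hmem' b hc_adj.symm
    rcases h1 with rfl | rfl <;> rcases h2 with h2 | h2 <;> rcases h3 with h3 | h3 <;> simp_all
  subst hca
  -- c = a; we get a cycle
  have hedge : s(b, c) ∉ p.edges := by
    intro hmem
    have : c = p.reverse.getVert 1 := by
      apply edge_start p.reverse ((Walk.isPath_reverse_iff p).mpr hp)
      rw [Walk.edges_reverse, List.mem_reverse]; exact hmem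
    exact hc_ne_pen this
  have hcyc : (Walk.cons hc_adj p).IsCycle :=
    (Walk.cons_isCycle_iff p hc_adj).mpr ⟨hp, hedge⟩
  refine ⟨b, Walk.cons hc_adj p, ?_, ?_⟩
  · rw [Walk.isHamiltonianCycle_iff_isCycle_and_support_count_tail_eq_one]
    refine ⟨hcyc, ?_⟩
    intro z
    have hall := cycle_support_all hcyc hreg hconn.preconnected
    have hz : z ∈ p.support := by
      have := hall z
      rw [Walk.support_cons, List.mem_cons] at this
      rcases this with rfl | h
      · exact p.end_mem_support
      · exact h
    rw [Walk.support_cons, List.tail_cons]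
    exact le_antisymm (List.nodup_iff_count_le_one.mp hp.support_nodup z)
      (List.count_pos_iff.mpr hz)
  · intro e he
    induction e with
    | h s t =>
      have hadj : H.Adj s t := he
      exact adj_edge_mem_of_cycle hcyc hreg (cycle_support_all hcyc hreg hconn.preconnected s) hadj

end Part4

section Part5
variable {W : Type*} [Fintype W] [DecidableEq W] {F : SimpleGraph W}

/-- From any vertex, there is a reachable vertex of degree at most one. -/
lemma leaf_reach (hac : F.IsAcyclic) (a : W) :
    ∃ b, (F.neighborSet b).ncard ≤ 1 ∧ F.Reachable a b := by
  obtain ⟨b, p, hp, hmax⟩ := exists_maximal_path (H := F) a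
  refine ⟨b, ?_, ⟨p⟩⟩
  have hsub := maximal_path_end_nbrs hac p hp hmax
  calc (F.neighborSet b).ncard ≤ ({p.reverse.getVert 1} : Set W).ncard :=
        Set.ncard_le_ncard hsub (Set.finite_singleton _)
    _ = 1 := Set.ncard_singleton _

lemma two_leaves (hac : F.IsAcyclic) (hmin : ∀ u : W, 1 ≤ (F.neighborSet u).ncard) (a : W) :
    ∃ b₁ b₂ : W, b₁ ≠ b₂ ∧ (F.neighborSet b₁).ncard = 1 ∧ (F.neighborSet b₂).ncard = 1 := by
  obtain ⟨b₁, hb₁, -⟩ := leaf_reach hac a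
  obtain ⟨b₂, p, hp, hmax⟩ := exists_maximal_path (H := F) b₁
  have hb₂ : (F.neighborSet b₂).ncard ≤ 1 := by
    have hsub := maximal_path_end_nbrs hac p hp hmax
    calc (F.neighborSet b₂).ncard ≤ ({p.reverse.getVert 1} : Set W).ncard :=
          Set.ncard_le_ncard hsub (Set.finite_singleton _)
      _ = 1 := Set.ncard_singleton _
  refine ⟨b₁, b₂, ?_, le_antisymm hb₁ (hmin b₁), le_antisymm hb₂ (hmin b₂)⟩
  intro h
  subst h
  have hnil := eq_nil_of_isPath_loop hp
  subst hnil
  obtain ⟨z, hz⟩ := Set.nonempty_of_ncard_ne_zero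
    (s := F.neighborSet b₁) (by have := hmin b₁; omega)
  have hz2 : z ∈ (Walk.nil : F.Walk b₁ b₁).support := hmax z hz
  simp only [Walk.support_nil, List.mem_singleton] at hz2
  exact (hz : F.Adj b₁ z).ne' hz2

end Part5

section Part6
variable {V : Type} [Fintype V] [DecidableEq V]

lemma build_cycle (G : SimpleGraph V) (v : V)
    (F : SimpleGraph {u : V | u ≠ v}) (hle : F ≤ G.induce {u : V | u ≠ v})
    (hac : F.IsAcyclic)
    (hmin : ∀ u, 1 ≤ (F.neighborSet u).ncard)
    (hmax2 : ∀ u, (F.neighborSet u).ncard ≤ 2)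
    (hleafadj : ∀ u : {u : V | u ≠ v}, (F.neighborSet u).ncard = 1 → G.Adj v ↑u)
    (hL : {u : {u : V | u ≠ v} | (F.neighborSet u).ncard = 1}.ncard = 2) :
    ∃ (x : V) (w : G.Walk x x), w.IsHamiltonianCycle ∧
      ∀ e, e ∈ w.edges ↔
        (e ∈ Sym2.map (Subtype.val) '' F.edgeSet ∨
         ∃ u : {u : V | u ≠ v}, (F.neighborSet u).ncard = 1 ∧ e = s(v, ↑u)) := by
  set E : Set (Sym2 V) := Sym2.map (Subtype.val) '' F.edgeSet ∪
    {e | ∃ u : {u : V | u ≠ v}, (F.neighborSet u).ncard = 1 ∧ e = s(v, ↑u)} with hEdef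
  set C : SimpleGraph V := fromEdgeSet E with hCdef
  have himg : ∀ x y : V, s(x, y) ∈ Sym2.map (Subtype.val (p := fun u => u ∈ {u : V | u ≠ v})) '' F.edgeSet ↔
      ∃ (hx : x ≠ v) (hy : y ≠ v), F.Adj ⟨x, hx⟩ ⟨y, hy⟩ := by
    intro x y
    constructor
    · rintro ⟨e, he, heq⟩
      induction e with
      | h a b =>
        rw [Sym2.map_pair_eq, Sym2.eq_iff] at heq
        have hadj : F.Adj a b := he
        rcases heq with ⟨h1, h2⟩ | ⟨h1, h2⟩
        · subst h1; subst h2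
          exact ⟨a.2, b.2, hadj⟩
        · subst h1; subst h2
          exact ⟨b.2, a.2, hadj.symm⟩
    · rintro ⟨hx, hy, hadj⟩
      exact ⟨s(⟨x, hx⟩, ⟨y, hy⟩), hadj, by rw [Sym2.map_pair_eq]⟩
  have hCle : C ≤ G := by
    intro x y hxy
    rw [hCdef, fromEdgeSet_adj] at hxy
    obtain ⟨he, hne⟩ := hxy
    rcases he with he | he
    · obtain ⟨hx, hy, hadj⟩ := (himg x y).mp he
      exact hle hadj
    · obtain ⟨u, hu1, hequ⟩ := he
      rw [Sym2.eq_iff] at hequ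
      rcases hequ with ⟨rfl, rfl⟩ | ⟨rfl, rfl⟩
      · exact hleafadj u hu1
      · exact (hleafadj u hu1).symm
  obtain ⟨ℓ₁, ℓ₂, hll, hLeq⟩ := Set.ncard_eq_two.mp hL
  have hmemL : ∀ u : {u : V | u ≠ v}, (F.neighborSet u).ncard = 1 ↔ (u = ℓ₁ ∨ u = ℓ₂) := by
    intro u
    constructor
    · intro h
      have hu : u ∈ {u : {u : V | u ≠ v} | (F.neighborSet u).ncard = 1} := h
      rw [hLeq] at hu
      simpa using hu
    · intro h
      have hu : u ∈ ({ℓ₁, ℓ₂} : Set {u : V | u ≠ v}) := by simpa using h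
      rw [← hLeq] at hu
      exact hu
  have hNv : C.neighborSet v = {↑ℓ₁, ↑ℓ₂} := by
    ext z
    simp only [mem_neighborSet, hCdef, fromEdgeSet_adj, hEdef, Set.mem_union,
      Set.mem_insert_iff, Set.mem_singleton_iff, Set.mem_setOf_eq]
    constructor
    · rintro ⟨he | ⟨u, hu1, hequ⟩, hne⟩
      · obtain ⟨hx, -, -⟩ := (himg v z).mp he
        exact absurd rfl hx
      · rw [Sym2.eq_iff] at hequ
        rcases hequ with ⟨-, rfl⟩ | ⟨h1, rfl⟩
        · rcases (hmemL u).mp hu1 with rfl | rfl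
          · exact Or.inl rfl
          · exact Or.inr rfl
        · exact absurd h1.symm u.2
    · intro hz
      rcases hz with rfl | rfl
      · exact ⟨Or.inr ⟨ℓ₁, (hmemL ℓ₁).mpr (Or.inl rfl), rfl⟩, fun h => ℓ₁.2 h.symm⟩
      · exact ⟨Or.inr ⟨ℓ₂, (hmemL ℓ₂).mpr (Or.inr rfl), rfl⟩, fun h => ℓ₂.2 h.symm⟩
  have hNu : ∀ (z : V) (hz : z ≠ v), C.neighborSet z =
      Subtype.val '' (F.neighborSet ⟨z, hz⟩) ∪
        (if (F.neighborSet ⟨z, hz⟩).ncard = 1 then {v} else ∅) := by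
    intro z hz
    ext t
    simp only [mem_neighborSet, hCdef, fromEdgeSet_adj, hEdef, Set.mem_union,
      Set.mem_setOf_eq, Set.mem_image]
    constructor
    · rintro ⟨he | ⟨u, hu1, hequ⟩, hne⟩
      · obtain ⟨hx, hy, hadj⟩ := (himg z t).mp he
        exact Or.inl ⟨⟨t, hy⟩, hadj, rfl⟩
      · rw [Sym2.eq_iff] at hequ
        rcases hequ with ⟨rfl, rfl⟩ | ⟨h1, rfl⟩
        · exact absurd rfl hz
        · right
          have hu : u = ⟨z, hz⟩ := Subtype.ext h1.symm
          rw [hu] at hu1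
          rw [if_pos hu1]
          exact Set.mem_singleton _
    · rintro (⟨w, hw, rfl⟩ | ht)
      · refine ⟨Or.inl ((himg z ↑w).mpr ⟨hz, w.2, hw⟩), ?_⟩
        intro h
        exact F.ne_of_adj hw (Subtype.ext h)
      · by_cases h1 : (F.neighborSet ⟨z, hz⟩).ncard = 1
        · rw [if_pos h1] at ht
          obtain rfl : t = v := ht
          exact ⟨Or.inr ⟨⟨z, hz⟩, h1, Sym2.eq_swap.symm⟩, hz⟩
        · rw [if_neg h1] at ht
          exact absurd ht (Set.notMem_empty t)
  have hCreg : ∀ z : V, ∃ x y, x ≠ y ∧ C.neighborSet z = {x, y} := by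
    intro z
    by_cases hz : z = v
    · refine ⟨↑ℓ₁, ↑ℓ₂, fun h => hll (Subtype.ext h), ?_⟩
      rw [hz]; exact hNv
    · have h1 := hmin ⟨z, hz⟩
      have h2 := hmax2 ⟨z, hz⟩
      rcases (by omega : (F.neighborSet ⟨z, hz⟩).ncard = 1 ∨ (F.neighborSet ⟨z, hz⟩).ncard = 2)
        with hcase | hcase
      · obtain ⟨w₁, hw₁⟩ := Set.ncard_eq_one.mp hcase
        refine ⟨↑w₁, v, w₁.2, ?_⟩
        rw [hNu z hz, if_pos hcase, hw₁, Set.image_singleton, Set.singleton_union]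
      · obtain ⟨w₁, w₂, hw, hweq⟩ := Set.ncard_eq_two.mp hcase
        refine ⟨↑w₁, ↑w₂, fun h => hw (Subtype.ext h), ?_⟩
        rw [hNu z hz, if_neg (by omega), hweq, Set.union_empty, Set.image_insert_eq,
          Set.image_singleton]
  have hhom : ∀ {a b : {u : V | u ≠ v}}, F.Adj a b → C.Adj ↑a ↑b := by
    intro a b hab
    rw [hCdef, fromEdgeSet_adj]
    refine ⟨Or.inl ((himg ↑a ↑b).mpr ⟨a.2, b.2, hab⟩), ?_⟩
    intro h
    exact F.ne_of_adj hab (Subtype.ext h)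
  have hCconn : C.Connected := by
    rw [connected_iff]
    refine ⟨?_, ⟨v⟩⟩
    have hreachv : ∀ z : V, C.Reachable z v := by
      intro z
      by_cases hz : z = v
      · rw [hz]
      · obtain ⟨b, hb, hreach⟩ := leaf_reach (F := F) hac ⟨z, hz⟩
        have hb1 : (F.neighborSet b).ncard = 1 := le_antisymm hb (hmin b)
        have hbv : C.Adj ↑b v := by
          rw [hCdef, fromEdgeSet_adj]
          exact ⟨Or.inr ⟨b, hb1, Sym2.eq_swap.symm⟩, b.2⟩
        exact Reachable.trans
          (by exact hreach.map (⟨Subtype.val, fun h => hhom h⟩ : F →g C) :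
            C.Reachable z ↑b) hbv.reachable
    intro x y
    exact (hreachv x).trans (hreachv y).symm
  obtain ⟨b, w, hham, hcov⟩ := hamiltonian_of_two_regular hCconn hCreg
  have hbij : Function.Bijective ⇑(Hom.ofLE hCle) :=
    Function.bijective_id
  refine ⟨b, w.map (Hom.ofLE hCle), hham.map hbij, ?_⟩
  have hedges : (w.map (Hom.ofLE hCle)).edges = w.edges := by
    rw [Walk.edges_map]
    have : Sym2.map ⇑(Hom.ofLE hCle) = id := by
      rw [show ⇑(Hom.ofLE hCle) = (fun x => x) from rfl, Sym2.map_id']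
    rw [this, List.map_id]
  intro e
  rw [hedges]
  constructor
  · intro hme
    have hE : e ∈ C.edgeSet := w.edges_subset_edgeSet hme
    rw [hCdef, edgeSet_fromEdgeSet] at hE
    have := hE.1
    rw [hEdef] at this
    exact this
  · intro hE
    apply hcov
    rw [hCdef, edgeSet_fromEdgeSet]
    refine ⟨by rw [hEdef]; exact hE, ?_⟩
    simp only [Sym2.mem_diagSet]
    rcases hE with ⟨e', he', rfl⟩ | ⟨u, hu1, rfl⟩
    · induction e' with
      | h a b =>
        rw [Sym2.map_pair_eq, Sym2.mk_isDiag_iff]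
        intro h
        exact F.ne_of_adj he' (Subtype.ext h)
    · rw [Sym2.mk_isDiag_iff]
      exact fun h => u.2 h.symm

end Part6

end HamAux

open HamAux in
/-- If `G` is a 4-regular graph and `v` is a vertex such that the edge set of the
vertex-deleted subgraph `G - v` can be partitioned into two linear forests, then `G`
has a Hamiltonian decomposition: its edge set can be partitioned into two Hamiltonian
cycles. -/
theorem linearArboricity_hamiltonianDecomposition {V : Type} [Fintype V] [DecidableEq V]
    (G : SimpleGraph V) [DecidableRel G.Adj] (hreg : G.IsRegularOfDegree 4) (v : V)
    (hforests : ∃ F₁ F₂ : SimpleGraph {u : V | u ≠ v},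
      F₁ ≤ G.induce {u : V | u ≠ v} ∧ F₂ ≤ G.induce {u : V | u ≠ v} ∧
      IsLinearForest F₁ ∧ IsLinearForest F₂ ∧
      Disjoint F₁.edgeSet F₂.edgeSet ∧
      F₁.edgeSet ∪ F₂.edgeSet = (G.induce {u : V | u ≠ v}).edgeSet) :
    ∃ (x y : V) (H₁ : G.Walk x x) (H₂ : G.Walk y y),
      H₁.IsHamiltonianCycle ∧ H₂.IsHamiltonianCycle ∧
      (∀ e, ¬(e ∈ H₁.edges ∧ e ∈ H₂.edges)) ∧
      (∀ e ∈ G.edgeSet, e ∈ H₁.edges ∨ e ∈ H₂.edges) := by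
  obtain ⟨F₁, F₂, h₁, h₂, ⟨hac₁, hmax₁⟩, ⟨hac₂, hmax₂⟩, hdisj, hunion⟩ := hforests
  have hGdeg : ∀ u : V, (G.neighborSet u).ncard = 4 := by
    intro u
    rw [Set.ncard_eq_toFinset_card', ← neighborFinset_def]
    exact hreg u
  have hsplit : ∀ u w : {u : V | u ≠ v},
      (G.induce {u : V | u ≠ v}).Adj u w ↔ (F₁.Adj u w ∨ F₂.Adj u w) := by
    intro u w
    constructor
    · intro h
      have hm : s(u, w) ∈ F₁.edgeSet ∪ F₂.edgeSet := by
        rw [hunion]; exact h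
      rcases hm with hm | hm
      · exact Or.inl hm
      · exact Or.inr hm
    · rintro (h | h)
      · exact h₁ h
      · exact h₂ h
  have hdisjN : ∀ u, Disjoint (F₁.neighborSet u) (F₂.neighborSet u) := by
    intro u
    rw [Set.disjoint_left]
    intro w hw1 hw2
    exact Set.disjoint_left.mp hdisj (F₁.mem_edgeSet.mpr hw1) (F₂.mem_edgeSet.mpr hw2)
  have hNunion : ∀ u, (G.induce {u : V | u ≠ v}).neighborSet u =
      F₁.neighborSet u ∪ F₂.neighborSet u := by
    intro u
    ext w
    simp only [mem_neighborSet, Set.mem_union]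
    exact hsplit u w
  have hsum : ∀ u, (F₁.neighborSet u).ncard + (F₂.neighborSet u).ncard =
      ((G.induce {u : V | u ≠ v}).neighborSet u).ncard := by
    intro u
    rw [hNunion u, Set.ncard_union_eq (hdisjN u) (Set.toFinite _) (Set.toFinite _)]
  have hIndCard : ∀ u : {u : V | u ≠ v},
      ((G.induce {u : V | u ≠ v}).neighborSet u).ncard = if G.Adj v ↑u then 3 else 4 := by
    intro u
    have himage : Subtype.val '' ((G.induce {u : V | u ≠ v}).neighborSet u) =
        G.neighborSet ↑u \ {v} := by
      ext z
      simp only [Set.mem_image, mem_neighborSet, Set.mem_diff, Set.mem_singleton_iff]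
      constructor
      · rintro ⟨w, hw, rfl⟩
        exact ⟨(hw : G.Adj ↑u ↑w), w.2⟩
      · rintro ⟨hadj, hzv⟩
        exact ⟨⟨z, hzv⟩, hadj, rfl⟩
    have hcard : ((G.induce {u : V | u ≠ v}).neighborSet u).ncard =
        (G.neighborSet ↑u \ {v}).ncard := by
      rw [← himage, Set.ncard_image_of_injective _ Subtype.val_injective]
    rw [hcard]
    by_cases hadj : G.Adj v ↑u
    · rw [if_pos hadj,
        Set.ncard_diff_singleton_of_mem ((G.mem_neighborSet _ _).mpr hadj.symm), hGdeg]
    · rw [if_neg hadj,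
        Set.diff_singleton_eq_self (fun h => hadj ((G.mem_neighborSet _ _).mp h).symm), hGdeg]
  have hIndge3 : ∀ u : {u : V | u ≠ v},
      3 ≤ ((G.induce {u : V | u ≠ v}).neighborSet u).ncard := by
    intro u
    rw [hIndCard u]
    split <;> omega
  have hmin₁ : ∀ u, 1 ≤ (F₁.neighborSet u).ncard := by
    intro u
    have := hsum u; have := hIndge3 u; have := hmax₂ u
    omega
  have hmin₂ : ∀ u, 1 ≤ (F₂.neighborSet u).ncard := by
    intro u
    have := hsum u; have := hIndge3 u; have := hmax₁ u
    omega
  have hleafadj₁ : ∀ u : {u : V | u ≠ v}, (F₁.neighborSet u).ncard = 1 → G.Adj v ↑u := by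
    intro u hu
    by_contra hadj
    have hc := hIndCard u; rw [if_neg hadj] at hc
    have := hsum u; have := hmax₂ u
    omega
  have hleafadj₂ : ∀ u : {u : V | u ≠ v}, (F₂.neighborSet u).ncard = 1 → G.Adj v ↑u := by
    intro u hu
    by_contra hadj
    have hc := hIndCard u; rw [if_neg hadj] at hc
    have := hsum u; have := hmax₁ u
    omega
  have hNcard : {u : {u : V | u ≠ v} | G.Adj v ↑u}.ncard = 4 := by
    have himage : Subtype.val '' {u : {u : V | u ≠ v} | G.Adj v ↑u} = G.neighborSet v := by
      ext z
      simp only [Set.mem_image, Set.mem_setOf_eq, mem_neighborSet]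
      constructor
      · rintro ⟨w, hw, rfl⟩; exact hw
      · intro h; exact ⟨⟨z, h.ne'⟩, h, rfl⟩
    rw [← hGdeg v, ← himage, Set.ncard_image_of_injective _ Subtype.val_injective]
  have hLunion : {u : {u : V | u ≠ v} | (F₁.neighborSet u).ncard = 1} ∪
      {u : {u : V | u ≠ v} | (F₂.neighborSet u).ncard = 1} =
      {u : {u : V | u ≠ v} | G.Adj v ↑u} := by
    ext u
    simp only [Set.mem_union, Set.mem_setOf_eq]
    have hs := hsum u
    have hc := hIndCard u
    have m1 := hmax₁ u
    have m2 := hmax₂ u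
    have n1 := hmin₁ u
    have n2 := hmin₂ u
    constructor
    · intro h
      by_contra hadj
      rw [if_neg hadj] at hc
      omega
    · intro h
      rw [if_pos h] at hc
      omega
  have hLdisj : Disjoint {u : {u : V | u ≠ v} | (F₁.neighborSet u).ncard = 1}
      {u : {u : V | u ≠ v} | (F₂.neighborSet u).ncard = 1} := by
    rw [Set.disjoint_left]
    intro u hu1 hu2
    have hs := hsum u
    have hc := hIndge3 u
    rw [Set.mem_setOf_eq] at hu1 hu2
    omega
  -- nonempty subtype
  obtain ⟨a, ha⟩ := Set.nonempty_of_ncard_ne_zero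
    (s := {u : {u : V | u ≠ v} | G.Adj v ↑u}) (by omega)
  have hge₁ : 2 ≤ {u : {u : V | u ≠ v} | (F₁.neighborSet u).ncard = 1}.ncard := by
    obtain ⟨b₁, b₂, hne, hb₁, hb₂⟩ := two_leaves hac₁ hmin₁ a
    calc 2 = ({b₁, b₂} : Set _).ncard := (Set.ncard_pair hne).symm
      _ ≤ _ := Set.ncard_le_ncard (by
          intro z hz
          rcases hz with rfl | rfl
          · exact hb₁
          · exact hb₂) (Set.toFinite _)
  have hge₂ : 2 ≤ {u : {u : V | u ≠ v} | (F₂.neighborSet u).ncard = 1}.ncard := by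
    obtain ⟨b₁, b₂, hne, hb₁, hb₂⟩ := two_leaves hac₂ hmin₂ a
    calc 2 = ({b₁, b₂} : Set _).ncard := (Set.ncard_pair hne).symm
      _ ≤ _ := Set.ncard_le_ncard (by
          intro z hz
          rcases hz with rfl | rfl
          · exact hb₁
          · exact hb₂) (Set.toFinite _)
  have hsumL : {u : {u : V | u ≠ v} | (F₁.neighborSet u).ncard = 1}.ncard +
      {u : {u : V | u ≠ v} | (F₂.neighborSet u).ncard = 1}.ncard = 4 := by
    rw [← Set.ncard_union_eq hLdisj (Set.toFinite _) (Set.toFinite _), hLunion, hNcard]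
  have hL₁ : {u : {u : V | u ≠ v} | (F₁.neighborSet u).ncard = 1}.ncard = 2 := by omega
  have hL₂ : {u : {u : V | u ≠ v} | (F₂.neighborSet u).ncard = 1}.ncard = 2 := by omega
  obtain ⟨x, w₁, hham₁, hiff₁⟩ := build_cycle G v F₁ h₁ hac₁ hmin₁ hmax₁ hleafadj₁ hL₁
  obtain ⟨y, w₂, hham₂, hiff₂⟩ := build_cycle G v F₂ h₂ hac₂ hmin₂ hmax₂ hleafadj₂ hL₂
  refine ⟨x, y, w₁, w₂, hham₁, hham₂, ?_, ?_⟩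
  · rintro e ⟨he₁, he₂⟩
    rw [hiff₁] at he₁
    rw [hiff₂] at he₂
    rcases he₁ with ⟨e₁, hm₁, rfl⟩ | ⟨u₁, hu₁, rfl⟩
    · rcases he₂ with ⟨e₂, hm₂, heq⟩ | ⟨u₂, hu₂, heq⟩
      · have : e₂ = e₁ := Sym2.map.injective Subtype.val_injective heq
        subst this
        exact Set.disjoint_left.mp hdisj hm₁ hm₂
      · induction e₁ with
        | h a b =>
          rw [Sym2.map_pair_eq, Sym2.eq_iff] at heq
          rcases heq with ⟨h1, -⟩ | ⟨-, h2⟩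
          · exact a.2 h1
          · exact b.2 h2
    · rcases he₂ with ⟨e₂, hm₂, heq⟩ | ⟨u₂, hu₂, heq⟩
      · induction e₂ with
        | h a b =>
          rw [Sym2.map_pair_eq, Sym2.eq_iff] at heq
          rcases heq with ⟨h1, -⟩ | ⟨-, h2⟩
          · exact a.2 h1
          · exact b.2 h2
      · rw [Sym2.eq_iff] at heq
        have hu : u₂ = u₁ := by
          rcases heq with ⟨-, h2⟩ | ⟨h1, -⟩
          · exact Subtype.ext h2.symm
          · exact absurd h1.symm u₂.2
        subst hu
        exact Set.disjoint_left.mp hLdisj hu₁ hu₂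
  · have hcase : ∀ z : V, G.Adj v z → (s(v, z) ∈ w₁.edges ∨ s(v, z) ∈ w₂.edges) := by
      intro z hz
      have hzv : z ≠ v := hz.ne'
      have hzL : (⟨z, hzv⟩ : {u : V | u ≠ v}) ∈
          ({u : {u : V | u ≠ v} | (F₁.neighborSet u).ncard = 1} ∪
            {u : {u : V | u ≠ v} | (F₂.neighborSet u).ncard = 1}) := by
        rw [hLunion]
        exact hz
      rcases hzL with h | h
      · exact Or.inl ((hiff₁ _).mpr (Or.inr ⟨⟨z, hzv⟩, h, rfl⟩))
      · exact Or.inr ((hiff₂ _).mpr (Or.inr ⟨⟨z, hzv⟩, h, rfl⟩))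
    intro e he
    induction e with
    | h s t =>
      have hadj : G.Adj s t := he
      by_cases hs : s = v
      · rw [hs]
        rw [hs] at hadj
        exact hcase t hadj
      · by_cases ht : t = v
        · rw [ht, Sym2.eq_swap]
          rw [ht] at hadj
          exact hcase s hadj.symm
        · have hind : (G.induce {u : V | u ≠ v}).Adj ⟨s, hs⟩ ⟨t, ht⟩ := hadj
          rcases (hsplit _ _).mp hind with h | h
          · exact Or.inl ((hiff₁ _).mpr (Or.inl ⟨s(⟨s, hs⟩, ⟨t, ht⟩), h, by
              rw [Sym2.map_pair_eq]⟩))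
          · exact Or.inr ((hiff₂ _).mpr (Or.inl ⟨s(⟨s, hs⟩, ⟨t, ht⟩), h, by
              rw [Sym2.map_pair_eq]⟩))
end

section
/- Let G be a connected 4-regular simple graph with at least two vertices, and let H be a Hamiltonian cycle in the subdivided double D(G). Then the complement of H in D(G) (the spanning subgraph whose edge set is E(D(G)) \ E(H)) is 2-regular and connected, and hence is a single cycle through all vertices of D(G). -/
open SimpleGraph

section DD
variable {V : Type} (G : SimpleGraph V)

lemma D_adj_inl_inr {v : V} {i : Bool} {e : G.edgeSet} :
    (subdividedDouble G).Adj (Sum.inl (v, i)) (Sum.inr e) ↔ v ∈ (e : Sym2 V) := by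
  constructor
  · intro h
    rw [subdividedDouble, fromRel_adj] at h
    obtain ⟨-, h | h⟩ := h
    · obtain ⟨v', i', e', hv, he, hmem⟩ := h
      cases hv; cases he; exact hmem
    · obtain ⟨v', i', e', hv, -, -⟩ := h
      cases hv
  · intro h
    rw [subdividedDouble, fromRel_adj]
    exact ⟨by simp, Or.inl ⟨v, i, e, rfl, rfl, h⟩⟩

lemma D_adj_inr_inl {v : V} {i : Bool} {e : G.edgeSet} :
    (subdividedDouble G).Adj (Sum.inr e) (Sum.inl (v, i)) ↔ v ∈ (e : Sym2 V) := by
  rw [adj_comm]; exact D_adj_inl_inr G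

lemma D_not_adj_inl {a b : V × Bool} :
    ¬ (subdividedDouble G).Adj (Sum.inl a) (Sum.inl b) := by
  simp [subdividedDouble, fromRel_adj]

lemma D_not_adj_inr {e f : G.edgeSet} :
    ¬ (subdividedDouble G).Adj (Sum.inr e) (Sum.inr f) := by
  simp [subdividedDouble, fromRel_adj]

lemma D_nbhd_inl (v : V) (i : Bool) :
    (subdividedDouble G).neighborSet (Sum.inl (v, i)) =
      Sum.inr '' {f : G.edgeSet | v ∈ (f : Sym2 V)} := by
  ext y
  cases y with
  | inl b => simp [mem_neighborSet, D_not_adj_inl]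
  | inr f => simp [mem_neighborSet, D_adj_inl_inr]

lemma D_nbhd_inl_ncard [Fintype V] [DecidableEq V] [DecidableRel G.Adj]
    (hreg : G.IsRegularOfDegree 4) (v : V) (i : Bool) :
    ((subdividedDouble G).neighborSet (Sum.inl (v, i))).ncard = 4 := by
  rw [D_nbhd_inl, Set.ncard_image_of_injective _ Sum.inr_injective]
  have himg : Subtype.val '' {f : G.edgeSet | v ∈ (f : Sym2 V)} = G.incidenceSet v := by
    ext e
    simp only [Set.mem_image, Set.mem_setOf_eq, incidenceSet, Set.mem_sep_iff]
    constructor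
    · rintro ⟨f, hf, rfl⟩; exact ⟨f.2, hf⟩
    · rintro ⟨he, hv⟩; exact ⟨⟨e, he⟩, hv, rfl⟩
  have := Set.ncard_image_of_injective {f : G.edgeSet | v ∈ (f : Sym2 V)} Subtype.val_injective
  rw [himg] at this
  rw [← this]
  have : (G.incidenceSet v).ncard = (G.neighborSet v).ncard := by
    rw [← Nat.card_coe_set_eq, ← Nat.card_coe_set_eq]
    exact Nat.card_congr (G.incidenceSetEquivNeighborSet v)
  rw [this, ← Nat.card_coe_set_eq, Nat.card_eq_fintype_card,
    G.card_neighborSet_eq_degree v, hreg v]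

lemma D_nbhd_inr (e : G.edgeSet) {u w : V} (he : (e : Sym2 V) = s(u, w)) :
    (subdividedDouble G).neighborSet (Sum.inr e) =
      {Sum.inl (u, false), Sum.inl (u, true), Sum.inl (w, false), Sum.inl (w, true)} := by
  ext y
  cases y with
  | inl b =>
    obtain ⟨v, j⟩ := b
    simp only [mem_neighborSet, D_adj_inr_inl, he, Sym2.mem_iff, Set.mem_insert_iff,
      Set.mem_singleton_iff, Sum.inl.injEq, Prod.mk.injEq]
    rcases j with _ | _ <;> tauto
  | inr f => simp [mem_neighborSet, D_not_adj_inr]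

lemma D_nbhd_inr_ncard [Fintype V] (e : G.edgeSet) {u w : V} (he : (e : Sym2 V) = s(u, w))
    (hne : u ≠ w) :
    ((subdividedDouble G).neighborSet (Sum.inr e)).ncard = 4 := by
  rw [D_nbhd_inr G e he]
  rw [Set.ncard_insert_of_notMem (by simp [hne]) (Set.toFinite _),
    Set.ncard_insert_of_notMem (by simp [hne]) (Set.toFinite _),
    Set.ncard_insert_of_notMem (by simp [hne]) (Set.toFinite _),
    Set.ncard_singleton]

lemma D_rep (e : G.edgeSet) : ∃ u w : V, (e : Sym2 V) = s(u, w) ∧ G.Adj u w :=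
  ⟨(e : Sym2 V).out.1, (e : Sym2 V).out.2, (Quot.out_eq _).symm, by
    have h := e.2
    rw [← G.mem_edgeSet]
    convert h using 1
    exact Quot.out_eq _⟩
end DD

section GeneralGraph
variable {W : Type*} {Γ : SimpleGraph W}

/-- In a path, the only edge at the starting vertex goes to the second vertex. -/
lemma aux_start_edge {u v : W} (q : Γ.Walk u v) (hq : q.IsPath) {y : W}
    (hy : s(u, y) ∈ q.edges) : y = q.getVert 1 := by
  cases q with
  | nil => simp at hy
  | cons h q' =>
    rw [SimpleGraph.Walk.edges_cons, List.mem_cons] at hy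
    rcases hy with hy | hy
    · rw [Sym2.congr_right] at hy
      simpa using hy
    · exact absurd (q'.fst_mem_support_of_mem_edges hy)
        ((SimpleGraph.Walk.cons_isPath_iff _ _).mp hq).2

/-- The first edge of a nonnil walk. -/
lemma aux_first_edge_mem {u v : W} (q : Γ.Walk u v) (hlen : 0 < q.length) :
    s(u, q.getVert 1) ∈ q.edges := by
  have := q.toSubgraph_adj_getVert hlen
  rw [q.getVert_zero] at this
  exact (q.mem_edges_toSubgraph).mp (Subgraph.mem_edgeSet.mpr this)
end GeneralGraph

section GeneralGraph2
variable {W : Type*} {Γ : SimpleGraph W}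

/-- A cycle has exactly two edges at its base vertex. -/
lemma cycle_two_nbrs_start {x : W} (c : Γ.Walk x x) (hc : c.IsCycle) :
    ∃ y₁ y₂ : W, y₁ ≠ y₂ ∧ {y | s(x, y) ∈ c.edges} = {y₁, y₂} := by
  cases c with
  | nil => exact absurd rfl hc.ne_nil
  | @cons _ w _ h p =>
    have hp : p.IsPath := by
      rw [SimpleGraph.Walk.isPath_def]
      simpa using hc.support_nodup
    have hlen : 2 ≤ p.length := by
      have := hc.three_le_length
      simp only [SimpleGraph.Walk.length_cons] at this
      omega
    have hnodup : s(x, w) ∉ p.edges := by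
      have := hc.isTrail.edges_nodup
      rw [SimpleGraph.Walk.edges_cons, List.nodup_cons] at this
      exact this.1
    have hprlen : 0 < p.reverse.length := by
      rw [SimpleGraph.Walk.length_reverse]; omega
    refine ⟨w, p.reverse.getVert 1, ?_, ?_⟩
    · intro hw
      apply hnodup
      have := aux_first_edge_mem p.reverse hprlen
      rw [← hw] at this
      rwa [SimpleGraph.Walk.edges_reverse, List.mem_reverse] at this
    · ext y
      simp only [Set.mem_setOf_eq, Set.mem_insert_iff, Set.mem_singleton_iff,
        SimpleGraph.Walk.edges_cons, List.mem_cons]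
      constructor
      · rintro (hy | hy)
        · left; rwa [Sym2.congr_right] at hy
        · right
          refine aux_start_edge p.reverse hp.reverse ?_
          rwa [SimpleGraph.Walk.edges_reverse, List.mem_reverse]
      · rintro (rfl | rfl)
        · exact Or.inl rfl
        · right
          have := aux_first_edge_mem p.reverse hprlen
          rwa [SimpleGraph.Walk.edges_reverse, List.mem_reverse] at this

lemma cycle_two_nbrs [DecidableEq W] {x : W} (c : Γ.Walk x x) (hc : c.IsCycle) {z : W}
    (hz : z ∈ c.support) :
    ∃ y₁ y₂ : W, y₁ ≠ y₂ ∧ {y | s(z, y) ∈ c.edges} = {y₁, y₂} := by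
  obtain ⟨y₁, y₂, hne, hset⟩ := cycle_two_nbrs_start (c.rotate z hz) (hc.rotate hz)
  refine ⟨y₁, y₂, hne, ?_⟩
  rw [← hset]
  ext y
  simp only [Set.mem_setOf_eq]
  rw [(c.rotate_edges z hz).mem_iff]
end GeneralGraph2

section TwoRegular
variable {W : Type*} [Fintype W] [DecidableEq W] {Γ : SimpleGraph W}

/-- In a graph where every vertex has exactly two neighbours, any cycle is Hamiltonian
(given connectivity). -/
lemma isHamiltonianCycle_of_two_regular (hconn : Γ.Connected)
    (hdeg : ∀ z, (Γ.neighborSet z).ncard = 2) {t : W} (c : Γ.Walk t t) (hc : c.IsCycle) :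
    c.IsHamiltonianCycle := by
  classical
  have hclosed : ∀ z ∈ c.support, ∀ y, Γ.Adj z y → y ∈ c.support := by
    intro z hz y hy
    obtain ⟨y₁, y₂, hne, hset⟩ := cycle_two_nbrs c hc hz
    have hsub : ({y₁, y₂} : Set W) ⊆ Γ.neighborSet z := by
      rw [← hset]
      intro a ha
      exact Γ.mem_edgeSet.mp (c.edges_subset_edgeSet ha)
    have : ({y₁, y₂} : Set W) = Γ.neighborSet z :=
      Set.eq_of_subset_of_ncard_le hsub (by rw [hdeg z, Set.ncard_pair hne]) (Set.toFinite _)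
    have hyy : y ∈ ({y₁, y₂} : Set W) := this ▸ hy
    rw [← hset] at hyy
    exact c.snd_mem_support_of_mem_edges hyy
  have hreach : ∀ (u w : W) (q : Γ.Walk u w), u ∈ c.support → w ∈ c.support := by
    intro u w q
    induction q with
    | nil => exact id
    | cons h q ih => exact fun hu => ih (hclosed _ hu _ h)
  have hspan : ∀ w, w ∈ c.support := fun w =>
    hreach t w (hconn.preconnected t w).some c.start_mem_support
  rw [SimpleGraph.Walk.isHamiltonianCycle_isCycle_and_isHamiltonian_tail]
  refine ⟨hc, fun a => ?_⟩
  rw [SimpleGraph.Walk.support_tail_of_not_nil c hc.not_nil]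
  refine List.count_eq_one_of_mem hc.support_nodup ?_
  by_cases hat : a = t
  · subst hat
    cases c with
    | nil => exact absurd rfl hc.ne_nil
    | cons h p => simpa using p.end_mem_support
  · have := hspan a
    rw [SimpleGraph.Walk.support_eq_cons] at this
    rcases List.mem_cons.mp this with h' | h'
    · exact absurd h' hat
    · exact h'

/-- A finite connected graph in which every vertex has exactly two neighbours has a
Hamiltonian cycle. -/
lemma exists_hamCycle_of_two_regular (hconn : Γ.Connected)
    (hdeg : ∀ z, (Γ.neighborSet z).ncard = 2) :
    ∃ (t : W) (c : Γ.Walk t t), c.IsHamiltonianCycle := by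
  classical
  -- there is an edge
  obtain ⟨z0⟩ := hconn.nonempty
  have h2 := hdeg z0
  rw [Set.ncard_eq_two] at h2
  obtain ⟨a, b, hab, hNz0⟩ := h2
  have ha : Γ.Adj z0 a := by
    have : a ∈ Γ.neighborSet z0 := by rw [hNz0]; exact Set.mem_insert _ _
    exact this
  -- maximum length of a path
  let P : ℕ → Prop := fun n => ∃ (u v : W) (p : Γ.Walk u v), p.IsPath ∧ p.length = n
  have hP1 : P 1 := by
    refine ⟨z0, a, Walk.cons ha Walk.nil, ?_, rfl⟩
    rw [SimpleGraph.Walk.cons_isPath_iff]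
    exact ⟨SimpleGraph.Walk.IsPath.nil, by simp [ha.ne]⟩
  have : Nonempty W := ⟨z0⟩
  have hble : 1 ≤ Fintype.card W := Fintype.card_pos
  set N := Nat.findGreatest P (Fintype.card W) with hNdef
  have hPN : P N := Nat.findGreatest_spec hble hP1
  have hN1 : 1 ≤ N := Nat.le_findGreatest hble hP1
  obtain ⟨u, v, p, hp, hplen⟩ := hPN
  -- maximality: no path longer than N
  have hmax : ∀ (u' v' : W) (p' : Γ.Walk u' v'), p'.IsPath → p'.length ≤ N := by
    intro u' v' p' hp'
    exact Nat.le_findGreatest (le_of_lt hp'.length_lt) ⟨u', v', p', hp', rfl⟩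
  -- all neighbours of u are on p
  have hnbr : ∀ y, Γ.Adj u y → y ∈ p.support := by
    intro y hy
    by_contra hys
    have : (Walk.cons hy.symm p).IsPath := hp.cons hys
    have := hmax _ _ _ this
    rw [SimpleGraph.Walk.length_cons, hplen] at this
    omega
  -- p is not nil
  cases p with
  | nil => rw [SimpleGraph.Walk.length_nil] at hplen; omega
  | @cons _ s _ h q =>
    -- second neighbour t of u
    have h2 := hdeg u
    rw [Set.ncard_eq_two] at h2
    obtain ⟨y₁, y₂, hy12, hNu⟩ := h2
    have hs : s ∈ Γ.neighborSet u := h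
    rw [hNu] at hs
    -- pick the neighbour different from s
    obtain ⟨t, hts, htmem⟩ : ∃ t, t ≠ s ∧ t ∈ Γ.neighborSet u := by
      rcases hs with rfl | rfl
      · exact ⟨y₂, fun hh => hy12 hh.symm, by rw [hNu]; simp⟩
      · exact ⟨y₁, hy12, by rw [hNu]; simp⟩
    have hut : Γ.Adj u t := htmem
    have htsupp : t ∈ (Walk.cons h q).support := hnbr t hut
    -- build the cycle
    set r := (Walk.cons h q).takeUntil t htsupp with hrdef
    have hr : r.IsPath := hp.takeUntil htsupp
    have hcyc : (Walk.cons hut.symm r).IsCycle := by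
      rw [SimpleGraph.Walk.cons_isCycle_iff]
      refine ⟨hr, fun hmem => ?_⟩
      have : s(u, t) ∈ (Walk.cons h q).edges := by
        rw [Sym2.eq_swap] at hmem
        exact (Walk.cons h q).edges_takeUntil_subset htsupp hmem
      have := aux_start_edge _ hp this
      simp only [SimpleGraph.Walk.getVert_cons_succ, SimpleGraph.Walk.getVert_zero] at this
      exact hts this
    exact ⟨t, _, isHamiltonianCycle_of_two_regular hconn hdeg _ hcyc⟩
end TwoRegular

/-- the twin involution -/
def twOf {V : Type} (p : V × Bool) : V × Bool := (p.1, !p.2)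

section Main
variable {V : Type} [Fintype V] [DecidableEq V] (G : SimpleGraph V) [DecidableRel G.Adj]

/-- The complement of the walk `H` inside the subdivided double. -/
def HCompl {x : (V × Bool) ⊕ ↥G.edgeSet} (H : (subdividedDouble G).Walk x x) :
    SimpleGraph ((V × Bool) ⊕ ↥G.edgeSet) :=
  SimpleGraph.fromEdgeSet {e | e ∈ (subdividedDouble G).edgeSet ∧ e ∉ H.edges}

variable {x : (V × Bool) ⊕ ↥G.edgeSet} (H : (subdividedDouble G).Walk x x)

lemma C_adj {a b : (V × Bool) ⊕ ↥G.edgeSet} :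
    (HCompl G H).Adj a b ↔ (subdividedDouble G).Adj a b ∧ s(a, b) ∉ H.edges := by
  rw [HCompl, fromEdgeSet_adj]
  constructor
  · rintro ⟨⟨h1, h2⟩, -⟩
    exact ⟨(subdividedDouble G).mem_edgeSet.mp h1, h2⟩
  · rintro ⟨h1, h2⟩
    exact ⟨⟨(subdividedDouble G).mem_edgeSet.mpr h1, h2⟩, h1.ne⟩

lemma NH_subset (z : (V × Bool) ⊕ ↥G.edgeSet) :
    {y | s(z, y) ∈ H.edges} ⊆ (subdividedDouble G).neighborSet z := fun y hy =>
  (subdividedDouble G).mem_edgeSet.mp (H.edges_subset_edgeSet hy)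

lemma C_nbhd (z : (V × Bool) ⊕ ↥G.edgeSet) :
    (HCompl G H).neighborSet z =
      (subdividedDouble G).neighborSet z \ {y | s(z, y) ∈ H.edges} := by
  ext y
  rw [mem_neighborSet, C_adj]
  simp only [Set.mem_diff, mem_neighborSet, Set.mem_setOf_eq]

variable (hH : H.IsHamiltonianCycle)
include hH

lemma NH_pair (z : (V × Bool) ⊕ ↥G.edgeSet) :
    ∃ y₁ y₂, y₁ ≠ y₂ ∧ {y | s(z, y) ∈ H.edges} = {y₁, y₂} := by
  classical
  exact cycle_two_nbrs H hH.isCycle (hH.mem_support z)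

lemma NH_ncard (z : (V × Bool) ⊕ ↥G.edgeSet) : {y | s(z, y) ∈ H.edges}.ncard = 2 := by
  obtain ⟨y₁, y₂, hne, hset⟩ := NH_pair G H hH z
  rw [hset, Set.ncard_pair hne]

lemma C_two_regular (hreg : G.IsRegularOfDegree 4) (z : (V × Bool) ⊕ ↥G.edgeSet) :
    ((HCompl G H).neighborSet z).ncard = 2 := by
  have h4 : ((subdividedDouble G).neighborSet z).ncard = 4 := by
    cases z with
    | inl a => obtain ⟨v, i⟩ := a; exact D_nbhd_inl_ncard G hreg v i
    | inr e =>
      obtain ⟨u, w, he, hadj⟩ := D_rep G e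
      exact D_nbhd_inr_ncard G e he hadj.ne
  rw [C_nbhd, Set.ncard_diff (NH_subset G H z) (Set.toFinite _), h4, NH_ncard G H hH]

lemma sigma_step (hreg : G.IsRegularOfDegree 4) {e : G.edgeSet} {a b : V × Bool}
    (hab : a ≠ b)
    (ha : s(Sum.inl a, Sum.inr e) ∈ H.edges) (hb : s(Sum.inl b, Sum.inr e) ∈ H.edges) :
    (HCompl G H).Reachable (Sum.inl (twOf a)) (Sum.inl (twOf b)) := by
  classical
  obtain ⟨va, ia⟩ := a
  obtain ⟨vb, ib⟩ := b
  obtain ⟨u, w, he, hadj⟩ := D_rep G e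
  -- the H-neighbourhood of e is exactly {inl a, inl b}
  have hNHe : {y | s(Sum.inr e, y) ∈ H.edges} = {Sum.inl (va, ia), Sum.inl (vb, ib)} := by
    symm
    apply Set.eq_of_subset_of_ncard_le
    · intro y hy
      rcases hy with rfl | hy
      · rw [Set.mem_setOf_eq, Sym2.eq_swap]; exact ha
      · rw [Set.mem_singleton_iff] at hy; subst hy
        rw [Set.mem_setOf_eq, Sym2.eq_swap]; exact hb
    · rw [NH_ncard G H hH, Set.ncard_pair (by simpa using hab)]
    · exact Set.toFinite _
  have hmema : va ∈ (e : Sym2 V) :=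
    (D_adj_inl_inr G).mp ((subdividedDouble G).mem_edgeSet.mp (H.edges_subset_edgeSet ha))
  have hmemb : vb ∈ (e : Sym2 V) :=
    (D_adj_inl_inr G).mp ((subdividedDouble G).mem_edgeSet.mp (H.edges_subset_edgeSet hb))
  by_cases hvv : va = vb
  · -- twins of the same vertex: find an incident edge f avoiding all H-edges at the twins
    subst hvv
    have hii : ib = !ia := by
      cases ia <;> cases ib <;> simp_all
    have hinter : Sum.inr e ∈ {y | s(Sum.inl (va, ia), y) ∈ H.edges} ∩
        {y | s(Sum.inl (va, ib), y) ∈ H.edges} := ⟨ha, hb⟩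
    have hcard : ({y | s(Sum.inl (va, ia), y) ∈ H.edges} ∪
        {y | s(Sum.inl (va, ib), y) ∈ H.edges}).ncard < 4 := by
      have h1 := Set.ncard_union_add_ncard_inter
        {y | s(Sum.inl (va, ia), y) ∈ H.edges} {y | s(Sum.inl (va, ib), y) ∈ H.edges}
        (Set.toFinite _) (Set.toFinite _)
      rw [NH_ncard G H hH, NH_ncard G H hH] at h1
      have h2 : 0 < ({y | s(Sum.inl (va, ia), y) ∈ H.edges} ∩
          {y | s(Sum.inl (va, ib), y) ∈ H.edges}).ncard := by
        rw [Set.ncard_pos (Set.toFinite _)]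
        exact ⟨_, hinter⟩
      omega
    have hsub : {y | s(Sum.inl (va, ia), y) ∈ H.edges} ∪
        {y | s(Sum.inl (va, ib), y) ∈ H.edges} ⊆
        (subdividedDouble G).neighborSet (Sum.inl (va, ia)) := by
      intro y hy
      rcases hy with hy | hy
      · exact NH_subset G H _ hy
      · have := NH_subset G H _ hy
        rw [D_nbhd_inl] at this ⊢
        exact this
    obtain ⟨y, hyD, hyN⟩ := Set.exists_mem_notMem_of_ncard_lt_ncard
      (lt_of_lt_of_le hcard (le_of_eq (D_nbhd_inl_ncard G hreg va ia).symm)) (Set.toFinite _)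
    rw [D_nbhd_inl] at hyD
    obtain ⟨f, hf, rfl⟩ := hyD
    have hCa : (HCompl G H).Adj (Sum.inl (va, ia)) (Sum.inr f) := by
      rw [C_adj]
      exact ⟨(D_adj_inl_inr G).mpr hf, fun hmem => hyN (Or.inl hmem)⟩
    have hCb : (HCompl G H).Adj (Sum.inl (va, ib)) (Sum.inr f) := by
      rw [C_adj]
      exact ⟨(D_adj_inl_inr G).mpr hf, fun hmem => hyN (Or.inr hmem)⟩
    have h1 : twOf (va, ia) = (va, ib) := by rw [twOf, hii]
    have h2 : twOf (va, ib) = (va, ia) := by rw [twOf, hii, Bool.not_not]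
    rw [h1, h2]
    exact (hCb.reachable).trans (hCa.reachable).symm
  · -- twins of different vertices: go through e itself
    have hCa : (HCompl G H).Adj (Sum.inr e) (Sum.inl (va, !ia)) := by
      rw [C_adj]
      refine ⟨(D_adj_inr_inl G).mpr hmema, fun hmem => ?_⟩
      have : Sum.inl (va, !ia) ∈ {y | s(Sum.inr e, y) ∈ H.edges} := hmem
      rw [hNHe] at this
      rcases this with h' | h'
      · rw [Sum.inl.injEq, Prod.mk.injEq] at h'
        simp at h'
      · rw [Set.mem_singleton_iff, Sum.inl.injEq, Prod.mk.injEq] at h'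
        exact hvv h'.1
    have hCb : (HCompl G H).Adj (Sum.inr e) (Sum.inl (vb, !ib)) := by
      rw [C_adj]
      refine ⟨(D_adj_inr_inl G).mpr hmemb, fun hmem => ?_⟩
      have : Sum.inl (vb, !ib) ∈ {y | s(Sum.inr e, y) ∈ H.edges} := hmem
      rw [hNHe] at this
      rcases this with h' | h'
      · rw [Sum.inl.injEq, Prod.mk.injEq] at h'
        exact hvv h'.1.symm
      · rw [Set.mem_singleton_iff, Sum.inl.injEq, Prod.mk.injEq] at h'
        simp at h'
    exact (hCa.reachable).symm.trans hCb.reachable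

lemma walk_key (hreg : G.IsRegularOfDegree 4) :
    ∀ (n : ℕ) (y z : (V × Bool) ⊕ ↥G.edgeSet) (p : (subdividedDouble G).Walk y z),
      p.length = n → (∀ s ∈ p.edges, s ∈ H.edges) → ∀ a b : V × Bool,
      y = Sum.inl a → z = Sum.inl b →
      (HCompl G H).Reachable (Sum.inl (twOf a)) (Sum.inl (twOf b)) := by
  intro n
  induction n using Nat.strong_induction_on with
  | _ n ih =>
    intro y z p hlen hedges a b hy hz
    cases p with
    | nil =>
      rw [hy] at hz
      rw [Sum.inl.injEq] at hz
      subst hz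
      exact Reachable.refl _
    | @cons _ y' _ h q =>
      subst hy
      cases y' with
      | inl c => exact absurd h (D_not_adj_inl G)
      | inr e =>
        cases q with
        | nil => exact absurd hz (by simp)
        | @cons _ y'' _ h' q' =>
          cases y'' with
          | inr f => exact absurd h' (D_not_adj_inr G)
          | inl a' =>
            have hea : s(Sum.inl a, Sum.inr e) ∈ H.edges := by
              apply hedges
              simp
            have heb : s(Sum.inl a', Sum.inr e) ∈ H.edges := by
              apply hedges
              rw [Sym2.eq_swap]
              simp
            have hstep : (HCompl G H).Reachable (Sum.inl (twOf a)) (Sum.inl (twOf a')) := by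
              by_cases haa : a = a'
              · subst haa; exact Reachable.refl _
              · exact sigma_step G H hH hreg haa hea heb
            refine hstep.trans ?_
            simp only [SimpleGraph.Walk.length_cons] at hlen
            refine ih q'.length (by omega) _ _ q' rfl ?_ a' b rfl hz
            intro s hs
            apply hedges
            simp only [SimpleGraph.Walk.edges_cons, List.mem_cons]
            exact Or.inr (Or.inr hs)

lemma twins_reachable (hreg : G.IsRegularOfDegree 4) (a b : V × Bool) :
    (HCompl G H).Reachable (Sum.inl a) (Sum.inl b) := by
  classical
  have hha : Sum.inl (twOf a) ∈ H.support := hH.mem_support _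
  have hhb : Sum.inl (twOf b) ∈ H.support := hH.mem_support _
  set p := (H.dropUntil _ hha).append (H.takeUntil _ hhb) with hpdef
  have hedges : ∀ s ∈ p.edges, s ∈ H.edges := by
    intro s hs
    rw [hpdef, SimpleGraph.Walk.edges_append, List.mem_append] at hs
    rcases hs with hs | hs
    · exact H.edges_dropUntil_subset hha hs
    · exact H.edges_takeUntil_subset hhb hs
  have := walk_key G H hH hreg p.length _ _ p rfl hedges (twOf a) (twOf b) rfl rfl
  have htw : ∀ c : V × Bool, twOf (twOf c) = c := by
    intro c; rw [twOf, twOf]; simp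
  rwa [htw, htw] at this

lemma C_connected (hreg : G.IsRegularOfDegree 4) : (HCompl G H).Connected := by
  classical
  rw [connected_iff]
  constructor
  · intro y z
    have key : ∀ t : (V × Bool) ⊕ ↥G.edgeSet, ∃ a : V × Bool,
        (HCompl G H).Reachable t (Sum.inl a) := by
      intro t
      cases t with
      | inl a => exact ⟨a, Reachable.refl _⟩
      | inr e =>
        obtain ⟨u, w, he, hadj⟩ := D_rep G e
        have hlt : {y | s(Sum.inr e, y) ∈ H.edges}.ncard <
            ((subdividedDouble G).neighborSet (Sum.inr e)).ncard := by
          rw [NH_ncard G H hH, D_nbhd_inr_ncard G e he hadj.ne]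
          omega
        obtain ⟨y', hyD, hyN⟩ := Set.exists_mem_notMem_of_ncard_lt_ncard hlt (Set.toFinite _)
        have hCadj : (HCompl G H).Adj (Sum.inr e) y' := by
          rw [C_adj]
          exact ⟨hyD, hyN⟩
        rw [D_nbhd_inr G e he] at hyD
        rcases hyD with h1 | h1 | h1 | h1 <;>
          first
            | (rw [Set.mem_singleton_iff] at h1; subst h1; exact ⟨_, hCadj.reachable⟩)
            | (subst h1; exact ⟨_, hCadj.reachable⟩)
    obtain ⟨a, hra⟩ := key y
    obtain ⟨b, hrb⟩ := key z
    exact (hra.trans (twins_reachable G H hH hreg a b)).trans hrb.symm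
  · exact ⟨x⟩

end Main

/-- For a Hamiltonian cycle `H` of the subdivided double of a connected 4-regular graph
with at least two vertices, the complement of `H` (the spanning subgraph on the edges of
`D(G)` not used by `H`) is 2-regular and connected, and hence is a single cycle through
all vertices of `D(G)`, i.e. a Hamiltonian cycle. -/
theorem subdividedDouble_complement_hamiltonian {V : Type} [Fintype V] [DecidableEq V]
    (G : SimpleGraph V) [DecidableRel G.Adj] (hcard : 2 ≤ Fintype.card V)
    (hconn : G.Connected) (hreg : G.IsRegularOfDegree 4)
    (x : (V × Bool) ⊕ ↥G.edgeSet) (H : (subdividedDouble G).Walk x x)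
    (hH : H.IsHamiltonianCycle) :
    (∀ z, ((SimpleGraph.fromEdgeSet
        {e | e ∈ (subdividedDouble G).edgeSet ∧ e ∉ H.edges}).neighborSet z).ncard = 2) ∧
    (SimpleGraph.fromEdgeSet
        {e | e ∈ (subdividedDouble G).edgeSet ∧ e ∉ H.edges}).Connected ∧
    ∃ (y : (V × Bool) ⊕ ↥G.edgeSet)
        (c : (SimpleGraph.fromEdgeSet
          {e | e ∈ (subdividedDouble G).edgeSet ∧ e ∉ H.edges}).Walk y y),
      c.IsHamiltonianCycle := by
  classical
  refine ⟨fun z => C_two_regular G H hH hreg z, C_connected G H hH hreg, ?_⟩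
  obtain ⟨t, c, hc⟩ := exists_hamCycle_of_two_regular (Γ := HCompl G H)
    (C_connected G H hH hreg) (C_two_regular G H hH hreg)
  exact ⟨t, c, hc⟩
end
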